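/- Let T be an efficient filling (k-regular, using the minimum number u(Γ) of symbols) of a k-core Γ, and let t be the largest symbol appearing in T with residue class j = T[t]. Then the restriction of T to the boxes with symbols < t is an efficient filling of the k-core s_j·Γ (Γ with all removable corners of residue j removed), and u(s_j·Γ) = u(Γ) − 1. -/

import Mathlib

/-- The hook length of a box `c = (r, col)` of a Young diagram. -/
def hookLength (Y : YoungDiagram) (c : ℕ × ℕ) : ℕ :=
  (Y.rowLen c.1 - c.2) + (Y.colLen c.2 - c.1) - 1

/-- A box of a Young diagram is a removable corner if it belongs to the diagram but the
boxes directly below it and directly to its right do not. -/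
def IsRemovableCorner (Y : YoungDiagram) (c : ℕ × ℕ) : Prop :=
  c ∈ Y ∧ (c.1 + 1, c.2) ∉ Y ∧ (c.1, c.2 + 1) ∉ Y

namespace EFR

noncomputable section
open scoped Classical

/-- The bead position of row `r`. -/
def bY (Y : YoungDiagram) (r : ℕ) : ℤ := (Y.rowLen r : ℤ) - r

/-- `x` is a bead of `Y`. -/
def bd (Y : YoungDiagram) (x : ℤ) : Prop := ∃ r : ℕ, bY Y r = x

lemma bY_strictAnti (Y : YoungDiagram) : StrictAnti (bY Y) := by
  apply strictAnti_nat_of_succ_lt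
  intro r
  have h := Y.rowLen_anti r (r + 1) (Nat.le_succ r)
  unfold bY
  push_cast
  omega

lemma bY_le_of_le (Y : YoungDiagram) {r s : ℕ} (h : r ≤ s) : bY Y s ≤ bY Y r :=
  (bY_strictAnti Y).antitone h

lemma bY_inj (Y : YoungDiagram) {r s : ℕ} (h : bY Y r = bY Y s) : r = s :=
  (bY_strictAnti Y).injective h

lemma rowLen_eq_zero_iff (Y : YoungDiagram) (r : ℕ) : Y.rowLen r = 0 ↔ Y.colLen 0 ≤ r := by
  constructor
  · intro h
    by_contra hc
    push_neg at hc
    have : (r, 0) ∈ Y := YoungDiagram.mem_iff_lt_colLen.mpr hc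
    rw [YoungDiagram.mem_iff_lt_rowLen] at this
    omega
  · intro h
    by_contra hc
    have : (r, 0) ∈ Y := YoungDiagram.mem_iff_lt_rowLen.mpr (by omega)
    rw [YoungDiagram.mem_iff_lt_colLen] at this
    omega

lemma bd_of_le (Y : YoungDiagram) {x : ℤ} (h : x ≤ -(Y.colLen 0 : ℤ)) : bd Y x := by
  have hx : (0:ℤ) ≤ -x := by
    have : (0:ℤ) ≤ (Y.colLen 0 : ℤ) := Int.natCast_nonneg _
    omega
  refine ⟨(-x).toNat, ?_⟩
  have hr : Y.rowLen (-x).toNat = 0 := by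
    rw [rowLen_eq_zero_iff]
    omega
  unfold bY
  rw [hr]
  omega

lemma bd_row (Y : YoungDiagram) (r : ℕ) : bd Y (bY Y r) := ⟨r, rfl⟩

/-- hook length as an integer, for cells. -/
lemma hookZ (Y : YoungDiagram) {r c : ℕ} (h : (r, c) ∈ Y) :
    (hookLength Y (r, c) : ℤ) = bY Y r - ((c : ℤ) - (Y.colLen c : ℤ) + 1) := by
  have h1 : c < Y.rowLen r := YoungDiagram.mem_iff_lt_rowLen.mp h
  have h2 : r < Y.colLen c := YoungDiagram.mem_iff_lt_colLen.mp h
  have e : hookLength Y (r,c) = (Y.rowLen r - c) + (Y.colLen c - r) - 1 := rfl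
  unfold bY
  rw [e]
  omega

lemma hook_pos (Y : YoungDiagram) {r c : ℕ} (h : (r, c) ∈ Y) : 1 ≤ hookLength Y (r, c) := by
  have h1 : c < Y.rowLen r := YoungDiagram.mem_iff_lt_rowLen.mp h
  have h2 : r < Y.colLen c := YoungDiagram.mem_iff_lt_colLen.mp h
  have e : hookLength Y (r,c) = (Y.rowLen r - c) + (Y.colLen c - r) - 1 := rfl
  rw [e]
  omega

/-- A1 : the value `c - colLen c + 1` is a gap. -/
lemma notbd_xval (Y : YoungDiagram) {r c : ℕ} (h : (r, c) ∈ Y) :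
    ¬ bd Y ((c : ℤ) - (Y.colLen c : ℤ) + 1) := by
  have h2 : r < Y.colLen c := YoungDiagram.mem_iff_lt_colLen.mp h
  rintro ⟨s, hs⟩
  unfold bY at hs
  by_cases hsc : s < Y.colLen c
  · -- (s, c) ∈ Y so rowLen s ≥ c + 1
    have : (s, c) ∈ Y := YoungDiagram.mem_iff_lt_colLen.mpr hsc
    have h3 : c + 1 ≤ Y.rowLen s := YoungDiagram.mem_iff_lt_rowLen.mp this
    have h4 : (s:ℤ) ≤ (Y.colLen c : ℤ) - 1 := by omega
    have : ((Y.rowLen s : ℤ)) - s ≥ (c:ℤ) + 1 - ((Y.colLen c : ℤ) - 1) := by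
      have : ((c:ℤ) + 1) ≤ (Y.rowLen s : ℤ) := by exact_mod_cast h3
      omega
    omega
  · push_neg at hsc
    have : (s, c) ∉ Y := by
      rw [YoungDiagram.mem_iff_lt_colLen]; omega
    have h3 : Y.rowLen s ≤ c := by
      by_contra hc
      exact this (YoungDiagram.mem_iff_lt_rowLen.mpr (by omega))
    have : ((Y.rowLen s : ℤ)) - s ≤ (c:ℤ) - (Y.colLen c:ℤ) := by
      have : (Y.rowLen s : ℤ) ≤ (c:ℤ) := by exact_mod_cast h3
      have : ((Y.colLen c : ℤ)) ≤ (s:ℤ) := by exact_mod_cast hsc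
      omega
    omega

/-- the gap-value map along a row is strictly monotone. -/
lemma xval_strictMono (Y : YoungDiagram) :
    StrictMono (fun c : ℕ => (c : ℤ) - (Y.colLen c : ℤ) + 1) := by
  apply strictMono_nat_of_lt_succ
  intro c
  have h := Y.colLen_anti c (c + 1) (Nat.le_succ c)
  push_cast
  omega

/-- A2 : surjectivity, every gap below the bead of row `r` is the gap-value of a cell. -/
lemma exists_cell_of_gap (Y : YoungDiagram) (r : ℕ) {x : ℤ}
    (hg : ¬ bd Y x) (hlt : x < bY Y r) :
    ∃ c : ℕ, (r, c) ∈ Y ∧ (c : ℤ) - (Y.colLen c : ℤ) + 1 = x := by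
  -- first, the row is nonempty
  have hrow : 1 ≤ Y.rowLen r := by
    by_contra hc
    have h0 : Y.rowLen r = 0 := by omega
    -- x < -r, and all such are beads
    have hxr : x < -(r:ℤ) := by unfold bY at hlt; rw [h0] at hlt; simpa using hlt
    apply hg
    have hx : (0:ℤ) ≤ -x := by
      have : (0:ℤ) ≤ (r:ℤ) := Int.natCast_nonneg _
      omega
    refine ⟨(-x).toNat, ?_⟩
    have hge : r ≤ (-x).toNat := by omega
    have : Y.rowLen ((-x).toNat) = 0 := by
      have := Y.rowLen_anti r ((-x).toNat) hge
      omega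
    unfold bY; rw [this]; omega
  -- the set of candidate columns
  set f : ℕ → ℤ := fun c => (c : ℤ) - (Y.colLen c : ℤ) + 1 with hf
  have hx0 : f 0 ≤ x := by
    by_contra hc
    push_neg at hc
    -- x < 1 - colLen 0, so x ≤ -(colLen 0), bead
    apply hg
    apply bd_of_le
    simp only [hf] at hc
    push_cast at hc
    omega
  set S := (Finset.range (Y.rowLen r)).filter (fun c => f c ≤ x) with hS
  have hSne : S.Nonempty := ⟨0, Finset.mem_filter.mpr ⟨Finset.mem_range.mpr (by omega), hx0⟩⟩
  set c := S.max' hSne with hc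
  have hcS : c ∈ S := S.max'_mem hSne
  have hcr : c < Y.rowLen r := by
    have := Finset.mem_filter.mp hcS
    simpa using this.1
  have hcx : f c ≤ x := (Finset.mem_filter.mp hcS).2
  have hcell : (r, c) ∈ Y := YoungDiagram.mem_iff_lt_rowLen.mpr hcr
  refine ⟨c, hcell, ?_⟩
  by_contra hne
  have hflt : f c < x := lt_of_le_of_ne hcx hne
  -- derive that x is a bead, contradiction
  apply hg
  by_cases hlast : c + 1 < Y.rowLen r
  · -- c+1 is not in S by maximality
    have hnotS : ¬ (f (c+1) ≤ x) := by
      intro hcon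
      have : c + 1 ∈ S := Finset.mem_filter.mpr ⟨Finset.mem_range.mpr hlast, hcon⟩
      have := S.le_max' _ this
      omega
    push_neg at hnotS
    -- μ (c+1) < m ≤ μ c where x = c + 2 - m
    set m : ℤ := (c : ℤ) + 2 - x with hm
    have hm1 : (Y.colLen (c+1) : ℤ) < m := by
      simp only [hf] at hnotS; push_cast at hnotS; omega
    have hm2 : m ≤ (Y.colLen c : ℤ) := by
      simp only [hf] at hflt; omega
    have hmpos : 1 ≤ m := by
      have : (0:ℤ) ≤ (Y.colLen (c+1) : ℤ) := Int.natCast_nonneg _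
      omega
    set s : ℕ := (m - 1).toNat with hs
    have hsm : (s : ℤ) = m - 1 := by omega
    -- (s, c) ∈ Y since s < μ c
    have hsc : (s, c) ∈ Y := by
      rw [YoungDiagram.mem_iff_lt_colLen]
      omega
    have hsc1 : (s, c+1) ∉ Y := by
      rw [YoungDiagram.mem_iff_lt_colLen]
      push_neg
      omega
    have hlen1 : c + 1 ≤ Y.rowLen s := YoungDiagram.mem_iff_lt_rowLen.mp hsc
    have hlen2 : Y.rowLen s ≤ c + 1 := by
      by_contra hcon
      exact hsc1 (YoungDiagram.mem_iff_lt_rowLen.mpr (by omega))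
    have hlen : Y.rowLen s = c + 1 := le_antisymm hlen2 hlen1
    refine ⟨s, ?_⟩
    unfold bY
    rw [hlen]
    push_cast
    omega
  · -- c is the last cell of row r
    have hcr1 : c + 1 = Y.rowLen r := by omega
    -- x in (λ_r - μ_c, λ_r - r)
    set m : ℤ := (Y.rowLen r : ℤ) - x with hm
    have hm1 : (r : ℤ) < m := by unfold bY at hlt; omega
    have hm2 : m < (Y.colLen c : ℤ) := by
      simp only [hf] at hflt
      omega
    set s : ℕ := m.toNat with hs
    have hsm : (s : ℤ) = m := by
      have : (0:ℤ) ≤ (r:ℤ) := Int.natCast_nonneg _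
      omega
    have hsc : (s, c) ∈ Y := by
      rw [YoungDiagram.mem_iff_lt_colLen]; omega
    have hlen1 : c + 1 ≤ Y.rowLen s := YoungDiagram.mem_iff_lt_rowLen.mp hsc
    have hlen2 : Y.rowLen s ≤ Y.rowLen r := Y.rowLen_anti r s (by omega)
    have hlen : Y.rowLen s = Y.rowLen r := by omega
    refine ⟨s, ?_⟩
    unfold bY
    rw [hlen]
    omega




variable {k : ℕ}

/-- gap window count at bead position b -/
def gw (k : ℕ) (Y : YoungDiagram) (b : ℤ) : Finset ℕ :=
  (Finset.Ico 1 k).filter (fun d => ¬ bd Y (b - d))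

def ucard (k : ℕ) (Y : YoungDiagram) : ℕ :=
  (Y.cells.filter (fun c => hookLength Y c < k)).card

def kreg (k : ℕ) (Y : YoungDiagram) : Prop :=
  ∀ c ∈ Y.cells, ¬ (k ∣ hookLength Y c)

lemma rowcount (k : ℕ) (Y : YoungDiagram) (r : ℕ) :
    ((Finset.range (Y.rowLen r)).filter (fun c => hookLength Y (r, c) < k)).card
      = (gw k Y (bY Y r)).card := by
  apply Finset.card_bij (fun c _ => hookLength Y (r, c))
  · intro c hc
    have hc' := Finset.mem_filter.mp hc
    have hcell : (r, c) ∈ Y := YoungDiagram.mem_iff_lt_rowLen.mpr (Finset.mem_range.mp hc'.1)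
    refine Finset.mem_filter.mpr ⟨Finset.mem_Ico.mpr ⟨hook_pos Y hcell, hc'.2⟩, ?_⟩
    have hz := hookZ Y hcell
    have : bY Y r - (hookLength Y (r, c) : ℤ) = (c : ℤ) - (Y.colLen c : ℤ) + 1 := by omega
    rw [this]
    exact notbd_xval Y hcell
  · intro c1 h1 c2 h2 heq
    have h1' := Finset.mem_filter.mp h1
    have h2' := Finset.mem_filter.mp h2
    have hcell1 : (r, c1) ∈ Y := YoungDiagram.mem_iff_lt_rowLen.mpr (Finset.mem_range.mp h1'.1)
    have hcell2 : (r, c2) ∈ Y := YoungDiagram.mem_iff_lt_rowLen.mpr (Finset.mem_range.mp h2'.1)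
    have hz1 := hookZ Y hcell1
    have hz2 := hookZ Y hcell2
    have : ((c1 : ℤ) - (Y.colLen c1 : ℤ) + 1) = ((c2 : ℤ) - (Y.colLen c2 : ℤ) + 1) := by
      have : (hookLength Y (r, c1) : ℤ) = (hookLength Y (r, c2) : ℤ) := by exact_mod_cast heq
      omega
    exact (xval_strictMono Y).injective this
  · intro d hd
    have hd' := Finset.mem_filter.mp hd
    have hd1 : 1 ≤ d := (Finset.mem_Ico.mp hd'.1).1
    have hdk : d < k := (Finset.mem_Ico.mp hd'.1).2
    obtain ⟨c, hcell, hx⟩ := exists_cell_of_gap Y r hd'.2 (by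
      have : (1:ℤ) ≤ (d:ℤ) := by exact_mod_cast hd1
      omega)
    refine ⟨c, Finset.mem_filter.mpr ⟨Finset.mem_range.mpr (YoungDiagram.mem_iff_lt_rowLen.mp hcell), ?_⟩, ?_⟩
    · have hz := hookZ Y hcell
      rw [hx] at hz
      have : (hookLength Y (r, c) : ℤ) = (d : ℤ) := by omega
      have : hookLength Y (r, c) = d := by exact_mod_cast this
      omega
    · have hz := hookZ Y hcell
      rw [hx] at hz
      have : (hookLength Y (r, c) : ℤ) = (d : ℤ) := by omega
      exact_mod_cast this

lemma cells_decomp (k : ℕ) (Y : YoungDiagram) (N : ℕ) (hN : Y.colLen 0 ≤ N) :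
    Y.cells.filter (fun c => hookLength Y c < k)
      = (Finset.range N).biUnion
          (fun r => ((Finset.range (Y.rowLen r)).filter
            (fun c => hookLength Y (r, c) < k)).image (fun c => (r, c))) := by
  ext p
  obtain ⟨a, b⟩ := p
  simp only [Finset.mem_filter, Finset.mem_biUnion, Finset.mem_image, Finset.mem_range,
    YoungDiagram.mem_cells]
  constructor
  · rintro ⟨hmem, hk⟩
    have hb : b < Y.rowLen a := YoungDiagram.mem_iff_lt_rowLen.mp hmem
    have ha : a < N := by
      have h0 : (a, 0) ∈ Y := Y.up_left_mem le_rfl (Nat.zero_le b) hmem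
      have := YoungDiagram.mem_iff_lt_colLen.mp h0
      omega
    exact ⟨a, ha, b, ⟨hb, hk⟩, rfl⟩
  · rintro ⟨r, _, c, ⟨hc, hk⟩, heq⟩
    obtain ⟨rfl, rfl⟩ := Prod.mk.injEq .. ▸ (by exact Prod.mk.inj heq : r = a ∧ c = b)
    exact ⟨YoungDiagram.mem_iff_lt_rowLen.mpr hc, hk⟩

lemma ucard_eq_sum (k : ℕ) (Y : YoungDiagram) (N : ℕ) (hN : Y.colLen 0 ≤ N) :
    ucard k Y = ∑ r ∈ Finset.range N, (gw k Y (bY Y r)).card := by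
  unfold ucard
  rw [cells_decomp k Y N hN, Finset.card_biUnion]
  · apply Finset.sum_congr rfl
    intro r _
    rw [Finset.card_image_of_injective _ (fun c1 c2 h => (Prod.mk.inj h).2), rowcount]
  · intro r1 _ r2 _ hne
    simp only [Finset.disjoint_left, Finset.mem_image]
    rintro p ⟨c1, _, rfl⟩ ⟨c2, _, h⟩
    exact hne ((Prod.mk.inj h).1.symm)

lemma bd_iter (Y : YoungDiagram) (hcl : ∀ x, bd Y x → bd Y (x - k)) {x : ℤ} (hx : bd Y x) :
    ∀ m : ℕ, bd Y (x - m * k) := by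
  intro m
  induction m with
  | zero => simpa using hx
  | succ n ih =>
      have := hcl _ ih
      have e : x - (n : ℤ) * k - k = x - ((n : ℕ) + 1 : ℕ) * k := by push_cast; ring
      rwa [e] at this

lemma kreg_iff_closure (hk : 1 ≤ k) (Y : YoungDiagram) :
    kreg k Y ↔ ∀ x, bd Y x → bd Y (x - k) := by
  constructor
  · intro h x hx
    obtain ⟨r, hr⟩ := hx
    by_contra hg
    obtain ⟨c, hcell, hxv⟩ := exists_cell_of_gap Y r hg (by rw [hr]; omega)
    have hz := hookZ Y hcell
    rw [hxv, hr] at hz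
    have hhook : hookLength Y (r, c) = k := by omega
    exact h (r, c) ((YoungDiagram.mem_cells _).mpr hcell) (hhook ▸ dvd_refl k)
  · intro hcl c hc hdvd
    rw [YoungDiagram.mem_cells] at hc
    obtain ⟨a, b⟩ := c
    have hpos := hook_pos Y hc
    obtain ⟨m, hm⟩ := hdvd
    have hm1 : 1 ≤ m := by
      rcases Nat.eq_zero_or_pos m with h0 | h0
      · subst h0; rw [Nat.mul_zero] at hm; omega
      · exact h0
    have := bd_iter Y hcl (bd_row Y a) m
    have hz := hookZ Y hc
    have : bd Y ((b : ℤ) - (Y.colLen b : ℤ) + 1) := by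
      have e : bY Y a - (m : ℤ) * k = (b : ℤ) - (Y.colLen b : ℤ) + 1 := by
        have : (hookLength Y (a, b) : ℤ) = (m : ℤ) * (k : ℤ) := by
          rw [hm]; push_cast; ring
        omega
      rwa [e] at this
    exact notbd_xval Y hc this

-- STAGE3
lemma mem_aux (f : ℕ → ℕ) (hf : ∀ r, f (r + 1) ≤ f r) (N : ℕ) (hN : f N = 0) (p : ℕ × ℕ) :
    (p ∈ (Finset.range N).biUnion (fun r => (Finset.range (f r)).image (fun c => (r, c))))
      ↔ p.2 < f p.1 := by
  have hanti : Antitone f := antitone_nat_of_succ_le hf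
  obtain ⟨a, b⟩ := p
  simp only [Finset.mem_biUnion, Finset.mem_image, Finset.mem_range]
  constructor
  · rintro ⟨r, _, c, hc, heq⟩
    obtain ⟨rfl, rfl⟩ : r = a ∧ c = b := Prod.mk.inj heq
    exact hc
  · intro hb
    refine ⟨a, ?_, b, hb, rfl⟩
    by_contra hc
    push_neg at hc
    have := hanti hc
    omega

/-- Construct a Young diagram from a weakly decreasing, eventually-zero row length function. -/
def ofFn (f : ℕ → ℕ) (hf : ∀ r, f (r + 1) ≤ f r) (N : ℕ) (hN : f N = 0) : YoungDiagram where
  cells := (Finset.range N).biUnion (fun r => (Finset.range (f r)).image (fun c => (r, c)))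
  isLowerSet := by
    intro p q hle hq
    have hanti : Antitone f := antitone_nat_of_succ_le hf
    rw [Finset.mem_coe, mem_aux f hf N hN] at hq ⊢
    obtain ⟨h1, h2⟩ := hle
    calc q.2 ≤ p.2 := h2
    _ < f p.1 := hq
    _ ≤ f q.1 := hanti h1

lemma mem_ofFn (f : ℕ → ℕ) (hf : ∀ r, f (r + 1) ≤ f r) (N : ℕ) (hN : f N = 0) (p : ℕ × ℕ) :
    p ∈ ofFn f hf N hN ↔ p.2 < f p.1 := by
  rw [← YoungDiagram.mem_cells]
  exact mem_aux f hf N hN p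

lemma mem_ofFn' (f : ℕ → ℕ) (hf : ∀ r, f (r + 1) ≤ f r) (N : ℕ) (hN : f N = 0) (r c : ℕ) :
    (r, c) ∈ ofFn f hf N hN ↔ c < f r :=
  mem_ofFn f hf N hN (r, c)

lemma rowLen_ofFn (f : ℕ → ℕ) (hf : ∀ r, f (r + 1) ≤ f r) (N : ℕ) (hN : f N = 0) (r : ℕ) :
    (ofFn f hf N hN).rowLen r = f r := by
  set Z := ofFn f hf N hN with hZ
  apply le_antisymm
  · by_contra hc
    push_neg at hc
    have : (r, f r) ∈ Z := YoungDiagram.mem_iff_lt_rowLen.mpr hc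
    rw [hZ, mem_ofFn'] at this
    omega
  · by_contra hc
    push_neg at hc
    have : (r, Z.rowLen r) ∈ Z := by
      rw [hZ, mem_ofFn']
      exact hc
    rw [YoungDiagram.mem_iff_lt_rowLen] at this
    omega

lemma eq_of_rowLen_eq (Y Z : YoungDiagram) (h : ∀ r, Y.rowLen r = Z.rowLen r) : Y = Z := by
  obtain ⟨cy, _⟩ := Y
  obtain ⟨cz, _⟩ := Z
  simp only [YoungDiagram.mk.injEq]
  ext p
  have := h p.1
  constructor
  · intro hp
    have : p ∈ (⟨cz, by assumption⟩ : YoungDiagram) := by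
      rw [YoungDiagram.mem_iff_lt_rowLen, ← h]
      exact YoungDiagram.mem_iff_lt_rowLen.mp ((YoungDiagram.mem_cells _).mpr hp)
    exact (YoungDiagram.mem_cells _).mp this
  · intro hp
    have : p ∈ (⟨cy, by assumption⟩ : YoungDiagram) := by
      rw [YoungDiagram.mem_iff_lt_rowLen, h]
      exact YoungDiagram.mem_iff_lt_rowLen.mp ((YoungDiagram.mem_cells _).mpr hp)
    exact (YoungDiagram.mem_cells _).mp this

lemma le_iff_rowLen (Y Z : YoungDiagram) : Y ≤ Z ↔ ∀ r, Y.rowLen r ≤ Z.rowLen r := by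
  constructor
  · intro h r
    by_cases h0 : 0 < Y.rowLen r
    · have : (r, Y.rowLen r - 1) ∈ Y := YoungDiagram.mem_iff_lt_rowLen.mpr (by omega)
      have hz : (r, Y.rowLen r - 1) ∈ Z := h this
      have := YoungDiagram.mem_iff_lt_rowLen.mp hz
      omega
    · omega
  · intro h p hp
    have := YoungDiagram.mem_iff_lt_rowLen.mp (show (p.1, p.2) ∈ Y from hp)
    exact YoungDiagram.mem_iff_lt_rowLen.mpr (lt_of_lt_of_le this (h p.1))

lemma colLen0_le_of_le {Y Z : YoungDiagram} (h : Y ≤ Z) : Y.colLen 0 ≤ Z.colLen 0 := by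
  by_contra hc
  push_neg at hc
  have h1 : (Z.colLen 0, 0) ∈ Y := YoungDiagram.mem_iff_lt_colLen.mpr hc
  have h2 : (Z.colLen 0, 0) ∈ Z.cells :=
    YoungDiagram.cells_subset_iff.mpr h ((YoungDiagram.mem_cells _).mpr h1)
  rw [YoungDiagram.mem_cells, YoungDiagram.mem_iff_lt_colLen] at h2
  omega

/-- Removable corner row of residue class j. -/
def Cor (k : ℕ) (j : ℤ) (Y : YoungDiagram) (r : ℕ) : Prop :=
  Y.rowLen (r + 1) < Y.rowLen r ∧ ((Y.rowLen r : ℤ) - 1 - r) ≡ j [ZMOD (k : ℤ)]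

/-- Addable corner row of residue class j. -/
def Addb (k : ℕ) (j : ℤ) (Y : YoungDiagram) (r : ℕ) : Prop :=
  (r = 0 ∨ Y.rowLen r < Y.rowLen (r - 1)) ∧ ((Y.rowLen r : ℤ) - r) ≡ j [ZMOD (k : ℤ)]

lemma cor_lt_colLen {k j Y r} (h : Cor k j Y r) : r < Y.colLen 0 := by
  have h1 := h.1
  by_contra hc
  push_neg at hc
  have := (rowLen_eq_zero_iff Y r).mpr hc
  omega

lemma addb_le_colLen {k j Y r} (h : Addb k j Y r) : r ≤ Y.colLen 0 := by
  rcases h.1 with h0 | h1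
  · omega
  · by_contra hc
    push_neg at hc
    have e1 : Y.rowLen r = 0 := (rowLen_eq_zero_iff Y r).mpr (by omega)
    have e2 : Y.rowLen (r - 1) = 0 := (rowLen_eq_zero_iff Y (r - 1)).mpr (by omega)
    omega

/-- Erase one box at the end of each row in `RS`. -/
def eraseRows (Y : YoungDiagram) (RS : Finset ℕ)
    (hRS : ∀ r ∈ RS, Y.rowLen (r + 1) < Y.rowLen r) : YoungDiagram :=
  ofFn (fun r => if r ∈ RS then Y.rowLen r - 1 else Y.rowLen r)
    (by
      intro r
      have h1 := Y.rowLen_anti r (r + 1) (Nat.le_succ r)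
      by_cases h : r ∈ RS <;> by_cases h' : (r + 1) ∈ RS <;>
        simp only [h, h', if_true, if_false] <;>
        first
          | omega
          | (have := hRS r h; omega)
          | (have := hRS (r + 1) h'; omega)
          | (have := hRS r h; have := hRS (r + 1) h'; omega))
    (Y.colLen 0)
    (by
      have h0 : Y.rowLen (Y.colLen 0) = 0 := (rowLen_eq_zero_iff Y _).mpr le_rfl
      by_cases h : Y.colLen 0 ∈ RS
      · have := hRS _ h; omega
      · simp [h, h0])

lemma rowLen_eraseRows (Y : YoungDiagram) (RS : Finset ℕ) (hRS) (r : ℕ) :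
    (eraseRows Y RS hRS).rowLen r = if r ∈ RS then Y.rowLen r - 1 else Y.rowLen r :=
  rowLen_ofFn _ _ _ _ r

/-- Add one box at the end of each row in `AS`. -/
def addRowsD (Y : YoungDiagram) (AS : Finset ℕ)
    (hAS : ∀ r ∈ AS, r = 0 ∨ Y.rowLen r < Y.rowLen (r - 1)) : YoungDiagram :=
  ofFn (fun r => if r ∈ AS then Y.rowLen r + 1 else Y.rowLen r)
    (by
      intro r
      have h1 := Y.rowLen_anti r (r + 1) (Nat.le_succ r)
      by_cases h' : (r + 1) ∈ AS
      · have := hAS (r + 1) h'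
        simp only [h', if_true]
        rcases this with h0 | hlt
        · omega
        · simp only [Nat.add_sub_cancel] at hlt
          by_cases h : r ∈ AS <;> simp only [h, if_true, if_false] <;> omega
      · by_cases h : r ∈ AS <;> simp only [h, h', if_true, if_false] <;> omega)
    (Y.colLen 0 + 1)
    (by
      have h0 : Y.rowLen (Y.colLen 0) = 0 := (rowLen_eq_zero_iff Y _).mpr le_rfl
      have h1 : Y.rowLen (Y.colLen 0 + 1) = 0 := (rowLen_eq_zero_iff Y _).mpr (by omega)
      by_cases h : (Y.colLen 0 + 1) ∈ AS
      · rcases hAS _ h with h' | h'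
        · omega
        · simp only [Nat.add_sub_cancel] at h'
          omega
      · simp [h, h1])

lemma rowLen_addRowsD (Y : YoungDiagram) (AS : Finset ℕ) (hAS) (r : ℕ) :
    (addRowsD Y AS hAS).rowLen r = if r ∈ AS then Y.rowLen r + 1 else Y.rowLen r :=
  rowLen_ofFn _ _ _ _ r

/-- corner bead predicate (bead whose predecessor is a gap, of corner class j). -/
def CorB (k : ℕ) (j : ℤ) (Y : YoungDiagram) (x : ℤ) : Prop :=
  bd Y x ∧ ¬ bd Y (x - 1) ∧ (x - 1) ≡ j [ZMOD (k : ℤ)]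

/-- addable bead predicate. -/
def AddB (k : ℕ) (j : ℤ) (Y : YoungDiagram) (y : ℤ) : Prop :=
  bd Y y ∧ ¬ bd Y (y + 1) ∧ y ≡ j [ZMOD (k : ℤ)]

lemma notbd_pred_iff (Y : YoungDiagram) (r : ℕ) :
    ¬ bd Y (bY Y r - 1) ↔ Y.rowLen (r + 1) < Y.rowLen r := by
  constructor
  · intro h
    by_contra hc
    push_neg at hc
    have heq : Y.rowLen (r + 1) = Y.rowLen r :=
      le_antisymm (Y.rowLen_anti r (r + 1) (Nat.le_succ r)) hc
    exact h ⟨r + 1, by unfold bY; rw [heq]; push_cast; ring⟩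
  · intro h
    rintro ⟨s, hs⟩
    rcases lt_trichotomy s (r + 1) with h1 | h1 | h1
    · have : bY Y r ≤ bY Y s := bY_le_of_le Y (by omega)
      omega
    · subst h1
      unfold bY at hs
      push_cast at hs
      omega
    · have h2 : bY Y s < bY Y (r + 1) := (bY_strictAnti Y) h1
      have h3 : bY Y (r + 1) ≤ bY Y r - 1 := by
        unfold bY
        have := Y.rowLen_anti r (r + 1) (Nat.le_succ r)
        push_cast
        omega
      omega

lemma notbd_succ_iff (Y : YoungDiagram) (r : ℕ) :
    ¬ bd Y (bY Y r + 1) ↔ (r = 0 ∨ Y.rowLen r < Y.rowLen (r - 1)) := by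
  constructor
  · intro h
    by_cases h0 : r = 0
    · left; exact h0
    · right
      by_contra hc
      push_neg at hc
      have heq : Y.rowLen (r - 1) = Y.rowLen r :=
        le_antisymm hc (Y.rowLen_anti (r - 1) r (by omega))
      apply h
      refine ⟨r - 1, ?_⟩
      unfold bY
      rw [heq]
      have : (r : ℤ) - 1 = ((r - 1 : ℕ) : ℤ) := by omega
      omega
  · intro h
    rintro ⟨s, hs⟩
    rcases lt_trichotomy s r with h1 | h1 | h1
    · -- s ≤ r - 1
      have hr1 : 1 ≤ r := by omega
      rcases h with h0 | h0
      · omega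
      · have hle : bY Y (r - 1) ≤ bY Y s := bY_le_of_le Y (by omega)
        have : bY Y (r - 1) ≥ bY Y r + 2 := by
          unfold bY
          have : ((r - 1 : ℕ) : ℤ) = (r : ℤ) - 1 := by omega
          rw [this]
          have : (Y.rowLen r : ℤ) + 1 ≤ (Y.rowLen (r - 1)) := by exact_mod_cast h0
          omega
        omega
    · subst h1; omega
    · have : bY Y s < bY Y r := (bY_strictAnti Y) h1
      omega

lemma cor_iff_corB (k : ℕ) (j : ℤ) (Y : YoungDiagram) (r : ℕ) :
    Cor k j Y r ↔ CorB k j Y (bY Y r) := by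
  unfold Cor CorB
  rw [notbd_pred_iff]
  have : bY Y r - 1 = (Y.rowLen r : ℤ) - 1 - r := by unfold bY; ring
  rw [this]
  constructor
  · rintro ⟨h1, h2⟩; exact ⟨bd_row Y r, h1, h2⟩
  · rintro ⟨_, h1, h2⟩; exact ⟨h1, h2⟩

lemma addb_iff_addB (k : ℕ) (j : ℤ) (Y : YoungDiagram) (r : ℕ) :
    Addb k j Y r ↔ AddB k j Y (bY Y r) := by
  unfold Addb AddB
  rw [notbd_succ_iff]
  have : bY Y r = (Y.rowLen r : ℤ) - r := rfl
  rw [this]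
  constructor
  · rintro ⟨h1, h2⟩; exact ⟨bd_row Y r, h1, h2⟩
  · rintro ⟨_, h1, h2⟩; exact ⟨h1, h2⟩

lemma corB_row (k : ℕ) (j : ℤ) (Y : YoungDiagram) {x : ℤ} (h : CorB k j Y x) :
    ∃ r, bY Y r = x ∧ Cor k j Y r := by
  obtain ⟨r, hr⟩ := h.1
  exact ⟨r, hr, (cor_iff_corB k j Y r).mpr (hr ▸ h)⟩

lemma addB_row (k : ℕ) (j : ℤ) (Y : YoungDiagram) {y : ℤ} (h : AddB k j Y y) :
    ∃ r, bY Y r = y ∧ Addb k j Y r := by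
  obtain ⟨r, hr⟩ := h.1
  exact ⟨r, hr, (addb_iff_addB k j Y r).mpr (hr ▸ h)⟩

-- STAGE4
lemma not_cong_small {k : ℕ} (hk2 : 2 ≤ k) {a b : ℤ} (h : a ≡ b [ZMOD (k : ℤ)])
    (h1 : 0 < b - a) (h2 : b - a < k) : False := by
  have hd : (k : ℤ) ∣ b - a := (Int.modEq_iff_dvd.mp h)
  have := Int.le_of_dvd h1 hd
  omega

lemma bd_down_all {k : ℕ} (hk : 1 ≤ k) {Y : YoungDiagram}
    (hcl : ∀ x, bd Y x → bd Y (x - k)) {x y : ℤ} (hx : bd Y x) (hle : y ≤ x)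
    (hd : (k : ℤ) ∣ (x - y)) : bd Y y := by
  have hk' : (0:ℤ) < (k:ℤ) := by exact_mod_cast hk
  obtain ⟨m, hm⟩ := hd
  have hm0 : 0 ≤ m := by nlinarith
  have h := bd_iter Y hcl hx m.toNat
  have e : x - (m.toNat : ℤ) * k = y := by
    rw [Int.toNat_of_nonneg hm0]
    linarith
  rwa [e] at h

def cornerRows (k : ℕ) (j : ℤ) (Y : YoungDiagram) : Finset ℕ :=
  (Finset.range (Y.colLen 0)).filter (Cor k j Y)

lemma mem_cornerRows {k j Y r} : r ∈ cornerRows k j Y ↔ Cor k j Y r := by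
  unfold cornerRows
  rw [Finset.mem_filter, Finset.mem_range]
  exact ⟨fun h => h.2, fun h => ⟨cor_lt_colLen h, h⟩⟩

def sdown (k : ℕ) (j : ℤ) (Y : YoungDiagram) : YoungDiagram :=
  eraseRows Y (cornerRows k j Y) (fun r hr => (mem_cornerRows.mp hr).1)

lemma rowLen_sdown (k j) (Y : YoungDiagram) (r : ℕ) :
    (sdown k j Y).rowLen r = if Cor k j Y r then Y.rowLen r - 1 else Y.rowLen r := by
  unfold sdown
  rw [rowLen_eraseRows]
  by_cases h : Cor k j Y r
  · rw [if_pos (mem_cornerRows.mpr h), if_pos h]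
  · rw [if_neg (fun hc => h (mem_cornerRows.mp hc)), if_neg h]

lemma bY_sdown (k j) (Y : YoungDiagram) (r : ℕ) :
    bY (sdown k j Y) r = if Cor k j Y r then bY Y r - 1 else bY Y r := by
  unfold bY
  rw [rowLen_sdown]
  by_cases h : Cor k j Y r
  · rw [if_pos h, if_pos h]
    have : 1 ≤ Y.rowLen r := by have := h.1; omega
    push_cast [this]
    omega
  · rw [if_neg h, if_neg h]

lemma sdown_le (k j) (Y : YoungDiagram) : sdown k j Y ≤ Y := by
  rw [le_iff_rowLen]
  intro r
  rw [rowLen_sdown]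
  by_cases h : Cor k j Y r <;> simp [h]

lemma bd_sdown (k : ℕ) (j : ℤ) (Y : YoungDiagram) (x : ℤ) :
    bd (sdown k j Y) x ↔ ((bd Y x ∧ ¬ CorB k j Y x) ∨ CorB k j Y (x + 1)) := by
  constructor
  · rintro ⟨r, hr⟩
    rw [bY_sdown] at hr
    by_cases h : Cor k j Y r
    · right
      rw [if_pos h] at hr
      have : bY Y r = x + 1 := by omega
      exact this ▸ (cor_iff_corB k j Y r).mp h
    · left
      rw [if_neg h] at hr
      refine ⟨⟨r, hr⟩, ?_⟩
      intro hcx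
      obtain ⟨r', hr', hcor⟩ := corB_row k j Y hcx
      have : r' = r := bY_inj Y (by rw [hr', hr])
      exact h (this ▸ hcor)
  · rintro (⟨⟨r, hr⟩, hnc⟩ | hc)
    · refine ⟨r, ?_⟩
      rw [bY_sdown, if_neg, hr]
      intro hcor
      exact hnc (hr ▸ (cor_iff_corB k j Y r).mp hcor)
    · obtain ⟨r, hr, hcor⟩ := corB_row k j Y hc
      refine ⟨r, ?_⟩
      rw [bY_sdown, if_pos hcor, hr]
      ring

def addRows (k : ℕ) (j : ℤ) (Y : YoungDiagram) : Finset ℕ :=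
  (Finset.range (Y.colLen 0 + 1)).filter (Addb k j Y)

lemma mem_addRows {k j Y r} : r ∈ addRows k j Y ↔ Addb k j Y r := by
  unfold addRows
  rw [Finset.mem_filter, Finset.mem_range]
  exact ⟨fun h => h.2, fun h => ⟨by have := addb_le_colLen h; omega, h⟩⟩

def sraise (k : ℕ) (j : ℤ) (Y : YoungDiagram) : YoungDiagram :=
  addRowsD Y (addRows k j Y) (fun r hr => (mem_addRows.mp hr).1)

lemma rowLen_sraise (k j) (Y : YoungDiagram) (r : ℕ) :
    (sraise k j Y).rowLen r = if Addb k j Y r then Y.rowLen r + 1 else Y.rowLen r := by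
  unfold sraise
  rw [rowLen_addRowsD]
  by_cases h : Addb k j Y r
  · rw [if_pos (mem_addRows.mpr h), if_pos h]
  · rw [if_neg (fun hc => h (mem_addRows.mp hc)), if_neg h]

lemma bY_sraise (k j) (Y : YoungDiagram) (r : ℕ) :
    bY (sraise k j Y) r = if Addb k j Y r then bY Y r + 1 else bY Y r := by
  unfold bY
  rw [rowLen_sraise]
  by_cases h : Addb k j Y r
  · rw [if_pos h, if_pos h]; push_cast; ring
  · rw [if_neg h, if_neg h]

lemma le_sraise (k j) (Y : YoungDiagram) : Y ≤ sraise k j Y := by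
  rw [le_iff_rowLen]
  intro r
  rw [rowLen_sraise]
  by_cases h : Addb k j Y r <;> simp [h]

lemma bd_sraise (k : ℕ) (j : ℤ) (Y : YoungDiagram) (x : ℤ) :
    bd (sraise k j Y) x ↔ ((bd Y x ∧ ¬ AddB k j Y x) ∨ AddB k j Y (x - 1)) := by
  constructor
  · rintro ⟨r, hr⟩
    rw [bY_sraise] at hr
    by_cases h : Addb k j Y r
    · right
      rw [if_pos h] at hr
      have : bY Y r = x - 1 := by omega
      exact this ▸ (addb_iff_addB k j Y r).mp h
    · left
      rw [if_neg h] at hr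
      refine ⟨⟨r, hr⟩, ?_⟩
      intro hax
      obtain ⟨r', hr', hadd⟩ := addB_row k j Y hax
      have : r' = r := bY_inj Y (by rw [hr', hr])
      exact h (this ▸ hadd)
  · rintro (⟨⟨r, hr⟩, hna⟩ | ha)
    · refine ⟨r, ?_⟩
      rw [bY_sraise, if_neg, hr]
      intro hadd
      exact hna (hr ▸ (addb_iff_addB k j Y r).mp hadd)
    · obtain ⟨r, hr, hadd⟩ := addB_row k j Y ha
      refine ⟨r, ?_⟩
      rw [bY_sraise, if_pos hadd, hr]
      ring

section CoreBeads
variable {k : ℕ} {j : ℤ} {Y : YoungDiagram}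

/-- L2: no bead k-1 above a free bead. -/
lemma corB_not_bd_addk (hcl : ∀ x, bd Y x → bd Y (x - k)) {f : ℤ}
    (hf : CorB k j Y f) : ¬ bd Y (f + (k : ℤ) - 1) := by
  intro h
  have := hcl _ h
  have e : f + (k:ℤ) - 1 - k = f - 1 := by ring
  rw [e] at this
  exact hf.2.1 this

/-- L1: contiguity of free beads of a given class. -/
lemma corB_contig (hk : 1 ≤ k) (hcl : ∀ x, bd Y x → bd Y (x - k)) {x x' : ℤ}
    (hx : CorB k j Y x) (hx' : CorB k j Y x') (hlt : x' < x) : CorB k j Y (x - k) := by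
  have hk' : (0:ℤ) < (k:ℤ) := by exact_mod_cast hk
  have hdvd : (k : ℤ) ∣ x - x' := by
    have h1 : (x' - 1) ≡ (x - 1) [ZMOD (k:ℤ)] := hx'.2.2.trans hx.2.2.symm
    have := Int.modEq_iff_dvd.mp h1
    have e : x - 1 - (x' - 1) = x - x' := by ring
    rwa [e] at this
  obtain ⟨m, hm⟩ := hdvd
  have hm1 : 1 ≤ m := by nlinarith
  have hle : x' ≤ x - k := by nlinarith
  refine ⟨hcl _ hx.1, ?_, ?_⟩
  · intro hb
    have : bd Y (x' - 1) := bd_down_all hk hcl hb (by omega)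
      ⟨m - 1, by push_cast; linarith⟩
    exact hx'.2.1 this
  · have : (x - k - 1) ≡ (x - 1) [ZMOD (k:ℤ)] := by
      rw [Int.modEq_iff_dvd]
      exact ⟨1, by ring⟩
    exact this.trans hx.2.2

/-- dichotomy: a k-core cannot have both a removable and an addable corner of class j. -/
lemma dicho (hk : 1 ≤ k) (hcl : ∀ x, bd Y x → bd Y (x - k)) {f g : ℤ}
    (hf : CorB k j Y f) (hg : AddB k j Y g) : False := by
  have hdvd : (k : ℤ) ∣ (f - 1) - g := by
    rw [← Int.modEq_iff_dvd]
    exact hg.2.2.trans hf.2.2.symm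
  rcases le_or_gt f g with hle | hlt
  · -- bd g → bd (f - 1)
    have : bd Y (f - 1) := bd_down_all hk hcl hg.1 (by omega) (by
      have : (k:ℤ) ∣ g - (f - 1) := (dvd_neg.mp (by rw [neg_sub]; exact hdvd))
      exact this)
    exact hf.2.1 this
  · -- g + 1 ≤ f: bd f → bd (g + 1)
    have : bd Y (g + 1) := bd_down_all hk hcl hf.1 (by omega) (by
      have e : f - (g + 1) = (f - 1) - g := by ring
      rw [e]; exact hdvd)
    exact hg.2.1 this

end CoreBeads

-- STAGE5
section Moves
variable {k : ℕ} {j : ℤ} {Y : YoungDiagram}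

lemma corB_class {x : ℤ} (h : CorB k j Y x) : (x - 1) ≡ j [ZMOD (k:ℤ)] := h.2.2

/-- sdown preserves the closure property. -/
lemma sdown_closed (hk2 : 2 ≤ k) (hcl : ∀ x, bd Y x → bd Y (x - k)) :
    ∀ x, bd (sdown k j Y) x → bd (sdown k j Y) (x - k) := by
  have hk1 : 1 ≤ k := by omega
  intro x hx
  rw [bd_sdown] at hx ⊢
  rcases hx with ⟨hbd, hnc⟩ | hc
  · have hbk : bd Y (x - k) := hcl x hbd
    by_cases h2 : CorB k j Y (x - k)
    · exfalso
      apply hnc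
      refine ⟨hbd, ?_, ?_⟩
      · intro hb1
        have := hcl _ hb1
        have e : x - 1 - k = x - k - 1 := by ring
        rw [e] at this
        exact h2.2.1 this
      · have : (x - 1) ≡ (x - k - 1) [ZMOD (k:ℤ)] := by
          rw [Int.modEq_iff_dvd]; exact ⟨-1, by ring⟩
        exact this.trans h2.2.2
    · exact Or.inl ⟨hbk, h2⟩
  · -- x + 1 is a free bead of class j+1; x is a new bead
    by_cases h2 : CorB k j Y (x + 1 - k)
    · right
      have e : x - k + 1 = x + 1 - k := by ring
      rw [e]
      exact h2
    · left
      constructor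
      · -- bd Y (x - k) : since x+1-k is a bead but not free
        have hfk : bd Y (x + 1 - k) := hcl _ hc.1
        by_contra hnb
        apply h2
        refine ⟨hfk, ?_, ?_⟩
        · have e : x + 1 - k - 1 = x - k := by ring
          rw [e]
          exact hnb
        · have : (x + 1 - k - 1) ≡ (x + 1 - 1) [ZMOD (k:ℤ)] := by
            rw [Int.modEq_iff_dvd]; exact ⟨1, by ring⟩
          exact this.trans hc.2.2
      · -- class mismatch
        intro hcx
        have h1 : (x - k - 1) ≡ j [ZMOD (k:ℤ)] := hcx.2.2
        have h2' : (x + 1 - 1) ≡ j [ZMOD (k:ℤ)] := hc.2.2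
        have h2'' : x ≡ j [ZMOD (k:ℤ)] := by simpa using h2'
        have h3 : (x - k - 1) ≡ x [ZMOD (k:ℤ)] := h1.trans h2''.symm
        have h4 : (x - 1) ≡ x [ZMOD (k:ℤ)] := by
          have : (x - 1) ≡ (x - k - 1) [ZMOD (k:ℤ)] := by
            rw [Int.modEq_iff_dvd]; exact ⟨-1, by ring⟩
          exact this.trans h3
        exact not_cong_small hk2 h4 (by omega) (by omega)

/-- sraise preserves the closure property. -/
lemma sraise_closed (hk2 : 2 ≤ k) (hcl : ∀ x, bd Y x → bd Y (x - k)) :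
    ∀ x, bd (sraise k j Y) x → bd (sraise k j Y) (x - k) := by
  have hk1 : 1 ≤ k := by omega
  intro x hx
  rw [bd_sraise] at hx ⊢
  rcases hx with ⟨hbd, hna⟩ | ha
  · have hbk : bd Y (x - k) := hcl x hbd
    by_cases h2 : AddB k j Y (x - k)
    · exfalso
      apply hna
      refine ⟨hbd, ?_, ?_⟩
      · intro hb1
        have := hcl _ hb1
        have e : x + 1 - k = x - k + 1 := by ring
        rw [e] at this
        exact h2.2.1 this
      · have : x ≡ (x - k) [ZMOD (k:ℤ)] := by
          rw [Int.modEq_iff_dvd]; exact ⟨-1, by ring⟩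
        exact this.trans h2.2.2
    · exact Or.inl ⟨hbk, h2⟩
  · -- x - 1 ∈ G
    by_cases h2 : AddB k j Y (x - 1 - k)
    · right
      have e : x - k - 1 = x - 1 - k := by ring
      rw [e]
      exact h2
    · left
      constructor
      · -- bd Y (x - k)
        have hgk : bd Y (x - 1 - k) := hcl _ ha.1
        by_contra hnb
        apply h2
        refine ⟨hgk, ?_, ?_⟩
        · have e : x - 1 - k + 1 = x - k := by ring
          rw [e]
          exact hnb
        · have : (x - 1 - k) ≡ (x - 1) [ZMOD (k:ℤ)] := by
            rw [Int.modEq_iff_dvd]; exact ⟨1, by ring⟩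
          exact this.trans ha.2.2
      · -- class mismatch
        intro hax
        have h1 : (x - k) ≡ j [ZMOD (k:ℤ)] := hax.2.2
        have h2' : (x - 1) ≡ j [ZMOD (k:ℤ)] := ha.2.2
        have h3 : (x - k) ≡ (x - 1) [ZMOD (k:ℤ)] := h1.trans h2'.symm
        have hk2' : (2:ℤ) ≤ (k:ℤ) := by exact_mod_cast hk2
        exact not_cong_small hk2 h3 (by omega) (by omega)

/-- addable beads of the lowered diagram are the old free beads, shifted. -/
lemma addB_sdown_iff (hk2 : 2 ≤ k) (hcl : ∀ x, bd Y x → bd Y (x - k))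
    (hex : ∃ f, CorB k j Y f) (y : ℤ) :
    AddB k j (sdown k j Y) y ↔ CorB k j Y (y + 1) := by
  have hk1 : 1 ≤ k := by omega
  constructor
  · rintro ⟨hbd, hnb, hcls⟩
    rw [bd_sdown] at hbd
    rw [bd_sdown] at hnb
    push_neg at hnb
    obtain ⟨hnb1, hnb2⟩ := hnb
    rcases hbd with ⟨hby, _⟩ | hc
    · by_cases hcy : CorB k j Y (y + 1)
      · exact hcy
      · exfalso
        have hnb1' : ¬ bd Y (y + 1) := fun hb => hcy (hnb1 hb)
        obtain ⟨f, hf⟩ := hex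
        exact dicho hk1 hcl hf ⟨hby, hnb1', hcls⟩
    · exact hc
  · intro hcy
    refine ⟨?_, ?_, ?_⟩
    · rw [bd_sdown]; right; exact hcy
    · rw [bd_sdown]
      push_neg
      refine ⟨fun hb => ?_, fun hc2 => ?_⟩
      · by_contra hn
        exact absurd hcy (by simpa using hn)
      · exfalso
        have h1 : (y + 1 + 1 - 1) ≡ j [ZMOD (k:ℤ)] := hc2.2.2
        have h2 : (y + 1 - 1) ≡ j [ZMOD (k:ℤ)] := hcy.2.2
        have h3 : (y + 1 - 1) ≡ (y + 1 + 1 - 1) [ZMOD (k:ℤ)] := h2.trans h1.symm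
        exact not_cong_small hk2 h3 (by omega) (by omega)
    · have e : y + 1 - 1 = y := by ring
      have := hcy.2.2
      rwa [e] at this

/-- free beads of the raised diagram are the old addable beads, shifted. -/
lemma corB_sraise_iff (hk2 : 2 ≤ k) (hcl : ∀ x, bd Y x → bd Y (x - k))
    (hex : ∃ g, AddB k j Y g) (x : ℤ) :
    CorB k j (sraise k j Y) x ↔ AddB k j Y (x - 1) := by
  have hk1 : 1 ≤ k := by omega
  constructor
  · rintro ⟨hbd, hnb, hcls⟩
    rw [bd_sraise] at hbd
    rw [bd_sraise] at hnb
    push_neg at hnb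
    obtain ⟨hnb1, hnb2⟩ := hnb
    rcases hbd with ⟨hbx, _⟩ | ha
    · by_cases hax : AddB k j Y (x - 1)
      · exact hax
      · exfalso
        have hnb1' : ¬ bd Y (x - 1) := fun hb => hax (hnb1 hb)
        obtain ⟨g, hg⟩ := hex
        exact dicho hk1 hcl ⟨hbx, hnb1', hcls⟩ hg
    · exact ha
  · intro hax
    refine ⟨?_, ?_, ?_⟩
    · rw [bd_sraise]; right; exact hax
    · rw [bd_sraise]
      push_neg
      refine ⟨fun hb => ?_, fun ha2 => ?_⟩
      · by_contra hn
        exact absurd hax (by simpa using hn)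
      · exfalso
        have h1 : (x - 1 - 1) ≡ j [ZMOD (k:ℤ)] := ha2.2.2
        have h2 : (x - 1) ≡ j [ZMOD (k:ℤ)] := hax.2.2
        have h3 : (x - 1 - 1) ≡ (x - 1) [ZMOD (k:ℤ)] := h1.trans h2.symm
        exact not_cong_small hk2 h3 (by omega) (by omega)
    · exact hax.2.2

end Moves

-- STAGE6
section Moves2
variable {k : ℕ} {j : ℤ} {Y : YoungDiagram}

lemma corB_close_eq (hk2 : 2 ≤ k) {x y : ℤ} (hx : CorB k j Y x) (hy : CorB k j Y y)
    (h1 : x - y < k) (h2 : y - x < k) : x = y := by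
  have hc : (x - 1) ≡ (y - 1) [ZMOD (k:ℤ)] := hx.2.2.trans hy.2.2.symm
  have hd : (k:ℤ) ∣ (y - 1) - (x - 1) := Int.modEq_iff_dvd.mp hc
  have e : (y - 1) - (x - 1) = y - x := by ring
  rw [e] at hd
  rcases lt_trichotomy x y with h | h | h
  · exfalso; have := Int.le_of_dvd (by omega) hd; omega
  · exact h
  · exfalso
    have hd' : (k:ℤ) ∣ (x - y) := by
      have := dvd_neg.mpr hd
      rwa [neg_sub] at this
    have := Int.le_of_dvd (by omega) hd'
    omega

lemma sraise_sdown (hk2 : 2 ≤ k) (hcl : ∀ x, bd Y x → bd Y (x - k))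
    (hex : ∃ f, CorB k j Y f) : sraise k j (sdown k j Y) = Y := by
  apply eq_of_rowLen_eq
  intro r
  rw [rowLen_sraise, rowLen_sdown]
  have key : Addb k j (sdown k j Y) r ↔ CorB k j Y (bY (sdown k j Y) r + 1) := by
    rw [addb_iff_addB]
    exact addB_sdown_iff hk2 hcl hex _
  by_cases h : Cor k j Y r
  · have hb : bY (sdown k j Y) r = bY Y r - 1 := by rw [bY_sdown, if_pos h]
    have : Addb k j (sdown k j Y) r := by
      rw [key, hb]
      have e : bY Y r - 1 + 1 = bY Y r := by ring
      rw [e]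
      exact (cor_iff_corB k j Y r).mp h
    rw [if_pos this, if_pos h]
    have : 1 ≤ Y.rowLen r := by have := h.1; omega
    omega
  · have hb : bY (sdown k j Y) r = bY Y r := by rw [bY_sdown, if_neg h]
    have : ¬ Addb k j (sdown k j Y) r := by
      rw [key, hb]
      intro hc
      obtain ⟨r'', hr'', hcor''⟩ := corB_row k j Y hc
      have hb'' : bY (sdown k j Y) r'' = bY Y r := by
        rw [bY_sdown, if_pos hcor'', hr'']
        ring
      have : r'' = r := bY_inj (sdown k j Y) (by rw [hb'', hb])
      exact h (this ▸ hcor'')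
    rw [if_neg this, if_neg h]

lemma sdown_sraise (hk2 : 2 ≤ k) (hcl : ∀ x, bd Y x → bd Y (x - k))
    (hex : ∃ g, AddB k j Y g) : sdown k j (sraise k j Y) = Y := by
  apply eq_of_rowLen_eq
  intro r
  rw [rowLen_sdown, rowLen_sraise]
  have key : Cor k j (sraise k j Y) r ↔ AddB k j Y (bY (sraise k j Y) r - 1) := by
    rw [cor_iff_corB]
    exact corB_sraise_iff hk2 hcl hex _
  by_cases h : Addb k j Y r
  · have hb : bY (sraise k j Y) r = bY Y r + 1 := by rw [bY_sraise, if_pos h]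
    have : Cor k j (sraise k j Y) r := by
      rw [key, hb]
      have e : bY Y r + 1 - 1 = bY Y r := by ring
      rw [e]
      exact (addb_iff_addB k j Y r).mp h
    rw [if_pos this, if_pos h]
    omega
  · have hb : bY (sraise k j Y) r = bY Y r := by rw [bY_sraise, if_neg h]
    have : ¬ Cor k j (sraise k j Y) r := by
      rw [key, hb]
      intro hc
      obtain ⟨r'', hr'', hadd''⟩ := addB_row k j Y hc
      have hb'' : bY (sraise k j Y) r'' = bY Y r := by
        rw [bY_sraise, if_pos hadd'', hr'']
        ring
      have : r'' = r := bY_inj (sraise k j Y) (by rw [hb'', hb])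
      exact h (this ▸ hadd'')
    rw [if_neg this, if_neg h]

lemma kreg_sdown (hk2 : 2 ≤ k) (hreg : kreg k Y) : kreg k (sdown k j Y) := by
  have hk1 : 1 ≤ k := by omega
  rw [kreg_iff_closure hk1] at hreg ⊢
  exact sdown_closed hk2 hreg

lemma kreg_sraise (hk2 : 2 ≤ k) (hreg : kreg k Y) : kreg k (sraise k j Y) := by
  have hk1 : 1 ≤ k := by omega
  rw [kreg_iff_closure hk1] at hreg ⊢
  exact sraise_closed hk2 hreg

end Moves2

-- STAGE7
section Count
variable {k : ℕ} {j : ℤ} {Y : YoungDiagram}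

lemma bd_b (Y : YoungDiagram) (r : ℕ) : bd Y (bY Y r) := bd_row Y r

/-- Row comparison, non-corner rows. -/
lemma rowA (hk2 : 2 ≤ k) (hcl : ∀ x, bd Y x → bd Y (x - k)) {r : ℕ} (h : ¬ Cor k j Y r) :
    (gw k (sdown k j Y) (bY (sdown k j Y) r)).card = (gw k Y (bY Y r)).card := by
  have hb : bY (sdown k j Y) r = bY Y r := by rw [bY_sdown, if_neg h]
  rw [hb]
  set b := bY Y r with hbdef
  have hcorb : ¬ CorB k j Y b := fun hc => h ((cor_iff_corB k j Y r).mpr hc)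
  by_cases hsp : ∃ d0 ∈ Finset.Ico 1 k, CorB k j Y (b - (d0 : ℤ))
  · obtain ⟨d0, hd0, hcb⟩ := hsp
    have hd01 : 1 ≤ d0 := (Finset.mem_Ico.mp hd0).1
    have hd0k : d0 < k := (Finset.mem_Ico.mp hd0).2
    -- d0 < k - 1
    have hd0k1 : d0 + 1 < k := by
      by_contra hc
      have he : (d0 : ℤ) = (k : ℤ) - 1 := by push_cast; omega
      apply corB_not_bd_addk hcl hcb
      have e : b - (d0:ℤ) + (k:ℤ) - 1 = b := by rw [he]; ring
      rw [e]
      exact bd_b Y r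
    -- uniqueness of d0
    have huniq : ∀ d : ℕ, 1 ≤ d → d < k → CorB k j Y (b - (d:ℤ)) → d = d0 := by
      intro d h1 h2 hc
      have := corB_close_eq hk2 hc hcb (by push_cast; omega) (by push_cast; omega)
      omega
    have hset : gw k (sdown k j Y) b = insert d0 ((gw k Y b).erase (d0 + 1)) := by
      ext d
      simp only [gw, Finset.mem_insert, Finset.mem_erase, Finset.mem_filter, Finset.mem_Ico]
      by_cases hdd0 : d = d0
      · subst hdd0
        simp only [true_or, iff_true]
        refine ⟨⟨hd01, hd0k⟩, ?_⟩
        rw [bd_sdown]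
        push_neg
        refine ⟨fun _ => hcb, ?_⟩
        intro hc2
        have h1 : (b - (d:ℤ) + 1 - 1) ≡ j [ZMOD (k:ℤ)] := hc2.2.2
        have h2 : (b - (d:ℤ) - 1) ≡ j [ZMOD (k:ℤ)] := hcb.2.2
        have h3 : (b - (d:ℤ) - 1) ≡ (b - (d:ℤ) + 1 - 1) [ZMOD (k:ℤ)] := h2.trans h1.symm
        exact not_cong_small hk2 h3 (by omega) (by omega)
      · by_cases hdd1 : d = d0 + 1
        · subst hdd1
          simp only [hdd0, false_or]
          constructor
          · rintro ⟨_, hg⟩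
            exfalso
            apply hg
            rw [bd_sdown]
            right
            have e : b - ((d0:ℕ) + 1 : ℕ) + 1 = b - (d0:ℤ) := by push_cast; ring
            rw [e]
            exact hcb
          · rintro ⟨hne, _⟩
            exact (hne rfl).elim
        · simp only [hdd0, false_or]
          constructor
          · rintro ⟨hrange, hg⟩
            refine ⟨hdd1, hrange, ?_⟩
            intro hbd
            apply hg
            rw [bd_sdown]
            left
            refine ⟨hbd, ?_⟩
            intro hc
            exact hdd0 (huniq d hrange.1 hrange.2 hc)
          · rintro ⟨_, hrange, hg⟩
            refine ⟨hrange, ?_⟩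
            rw [bd_sdown]
            push_neg
            refine ⟨fun hbd => (hg hbd).elim, ?_⟩
            intro hc2
            -- CorB (b - d + 1)
            rcases Nat.eq_or_lt_of_le hrange.1 with h1 | h1
            · -- d = 1 : CorB b, contradiction
              apply hcorb
              have e : b - (d:ℤ) + 1 = b := by
                have : (d:ℤ) = 1 := by omega
                rw [this]; ring
              rwa [e] at hc2
            · -- d ≥ 2 : CorB (b - (d-1)) forces d - 1 = d0
              have e : b - (d:ℤ) + 1 = b - ((d - 1 : ℕ) : ℤ) := by push_cast; omega
              rw [e] at hc2
              have := huniq (d - 1) (by omega) (by omega) hc2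
              omega
    rw [hset]
    rw [Finset.card_insert_of_notMem, Finset.card_erase_of_mem]
    · have h1 : d0 + 1 ∈ gw k Y b := by
        simp only [gw, Finset.mem_filter, Finset.mem_Ico]
        refine ⟨⟨by omega, hd0k1⟩, ?_⟩
        have e : b - ((d0 + 1 : ℕ) : ℤ) = b - (d0:ℤ) - 1 := by push_cast; ring
        rw [e]
        exact hcb.2.1
      have : 1 ≤ (gw k Y b).card := Finset.card_pos.mpr ⟨d0 + 1, h1⟩
      omega
    · simp only [gw, Finset.mem_filter, Finset.mem_Ico]
      refine ⟨⟨by omega, hd0k1⟩, ?_⟩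
      have e : b - ((d0 + 1 : ℕ) : ℤ) = b - (d0:ℤ) - 1 := by push_cast; ring
      rw [e]
      exact hcb.2.1
    · intro hc
      have := (Finset.mem_erase.mp hc).2
      simp only [gw, Finset.mem_filter] at this
      exact this.2 hcb.1
  · -- no special position : windows agree
    push_neg at hsp
    unfold gw
    apply congrArg
    apply Finset.filter_congr
    intro d hd
    have hd' := Finset.mem_Ico.mp hd
    have hiff : bd (sdown k j Y) (b - (d:ℤ)) ↔ bd Y (b - (d:ℤ)) := by
      rw [bd_sdown]
      constructor
      · rintro (⟨h1, _⟩ | h2)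
        · exact h1
        · exfalso
          rcases Nat.eq_or_lt_of_le hd'.1 with h1 | h1
          · apply hcorb
            have e : b - (d:ℤ) + 1 = b := by
              have : (d:ℤ) = 1 := by omega
              rw [this]; ring
            rwa [e] at h2
          · have e : b - (d:ℤ) + 1 = b - ((d - 1 : ℕ) : ℤ) := by push_cast; omega
            rw [e] at h2
            exact hsp (d - 1) (Finset.mem_Ico.mpr ⟨by omega, by omega⟩) h2
      · intro h1
        exact Or.inl ⟨h1, hsp d hd⟩
    rw [hiff]

/-- Row comparison, corner rows. -/
lemma rowB (hk2 : 2 ≤ k) (hcl : ∀ x, bd Y x → bd Y (x - k)) {r : ℕ} (h : Cor k j Y r) :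
    (gw k (sdown k j Y) (bY (sdown k j Y) r)).card + 1
      = (gw k Y (bY Y r)).card + (if CorB k j Y (bY Y r - k) then 1 else 0) := by
  set b := bY Y r with hbdef
  have hcb : CorB k j Y b := (cor_iff_corB k j Y r).mp h
  have hb : bY (sdown k j Y) r = b - 1 := by rw [bY_sdown, if_pos h]
  rw [hb]
  set A : Finset ℕ := (Finset.Ico 2 k).filter (fun d : ℕ => ¬ bd Y (b - (d:ℤ))) with hA
  -- step 1 : gw k Y b = insert 1 A
  have step1 : gw k Y b = insert 1 A := by
    ext d
    simp only [gw, hA, Finset.mem_insert, Finset.mem_filter, Finset.mem_Ico]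
    constructor
    · rintro ⟨⟨h1, h2⟩, hg⟩
      rcases Nat.eq_or_lt_of_le h1 with he | he
      · exact Or.inl he.symm
      · exact Or.inr ⟨⟨he, h2⟩, hg⟩
    · rintro (rfl | ⟨⟨h1, h2⟩, hg⟩)
      · refine ⟨⟨le_rfl, by omega⟩, ?_⟩
        have e : b - ((1:ℕ):ℤ) = b - 1 := by push_cast; ring
        rw [e]
        exact hcb.2.1
      · exact ⟨⟨by omega, h2⟩, hg⟩
  have h1A : 1 ∉ A := by simp [hA]
  -- step 2 : reindex the window of the lowered row
  set C : Finset ℕ := (Finset.Ico 2 (k+1)).filter (fun e : ℕ => ¬ bd (sdown k j Y) (b - (e:ℤ))) with hC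
  have step2 : (gw k (sdown k j Y) (b - 1)).card = C.card := by
    apply Finset.card_bij (fun d _ => d + 1)
    · intro d hd
      simp only [gw, Finset.mem_filter, Finset.mem_Ico] at hd
      simp only [hC, Finset.mem_filter, Finset.mem_Ico]
      refine ⟨⟨by omega, by omega⟩, ?_⟩
      have e : b - ((d + 1 : ℕ) : ℤ) = b - 1 - (d:ℤ) := by push_cast; ring
      rw [e]
      exact hd.2
    · intro d1 h1 d2 h2 he
      omega
    · intro e he
      simp only [hC, Finset.mem_filter, Finset.mem_Ico] at he
      refine ⟨e - 1, ?_, by omega⟩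
      simp only [gw, Finset.mem_filter, Finset.mem_Ico]
      refine ⟨⟨by omega, by omega⟩, ?_⟩
      have ee : b - 1 - ((e - 1 : ℕ) : ℤ) = b - (e:ℤ) := by push_cast; omega
      rw [ee]
      exact he.2
  -- step 3 : analyze C
  set C' : Finset ℕ := (Finset.Ico 2 k).filter (fun e : ℕ => ¬ bd (sdown k j Y) (b - (e:ℤ))) with hC'
  have hsplit : C = if ¬ bd (sdown k j Y) (b - (k:ℤ)) then insert k C' else C' := by
    have e1 : Finset.Ico 2 (k + 1) = insert k (Finset.Ico 2 k) := by
      ext d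
      simp only [Finset.mem_insert, Finset.mem_Ico]
      omega
    rw [hC, e1, Finset.filter_insert]
  have hkC' : k ∉ C' := by simp [hC']
  -- the middle windows agree
  have hmid : C' = A := by
    ext d
    simp only [hC', hA, Finset.mem_filter, Finset.mem_Ico]
    constructor
    · rintro ⟨⟨h1, h2⟩, hg⟩
      refine ⟨⟨h1, h2⟩, ?_⟩
      intro hbd
      apply hg
      rw [bd_sdown]
      left
      refine ⟨hbd, ?_⟩
      intro hc
      -- CorB (b - d) : class clash with CorB b
      have := corB_close_eq hk2 hc hcb (by push_cast; omega) (by push_cast; omega)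
      omega
    · rintro ⟨⟨h1, h2⟩, hg⟩
      refine ⟨⟨h1, h2⟩, ?_⟩
      rw [bd_sdown]
      push_neg
      refine ⟨fun hbd => (hg hbd).elim, ?_⟩
      intro hc2
      -- CorB (b - d + 1) = CorB (b - (d-1)) : forces d - 1 = 0, impossible
      have e : b - (d:ℤ) + 1 = b - ((d - 1 : ℕ) : ℤ) := by push_cast; omega
      rw [e] at hc2
      have := corB_close_eq hk2 hc2 hcb (by push_cast; omega) (by push_cast; omega)
      have : (d:ℤ) - 1 = 0 := by omega
      omega
  -- the end term
  have hend : (¬ bd (sdown k j Y) (b - (k:ℤ))) ↔ CorB k j Y (b - (k:ℤ)) := by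
    rw [bd_sdown]
    push_neg
    constructor
    · rintro ⟨h1, _⟩
      exact h1 (hcl b hcb.1)
    · intro hc
      refine ⟨fun _ => hc, ?_⟩
      intro hc2
      have h1 : (b - (k:ℤ) + 1 - 1) ≡ j [ZMOD (k:ℤ)] := hc2.2.2
      have h2 : (b - 1) ≡ j [ZMOD (k:ℤ)] := hcb.2.2
      have h3 : (b - (k:ℤ) + 1 - 1) ≡ (b - 1) [ZMOD (k:ℤ)] := h1.trans h2.symm
      exact not_cong_small hk2 h3 (by omega) (by omega)
  -- put it together
  rw [step2, hsplit, step1]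
  rw [Finset.card_insert_of_notMem h1A]
  by_cases hcase : CorB k j Y (b - (k:ℤ))
  · rw [if_pos (hend.mpr hcase), if_pos hcase, Finset.card_insert_of_notMem hkC', hmid]
  · rw [if_neg (fun hn => hcase (hend.mp hn)), if_neg hcase, hmid]

end Count

-- STAGE8
section Count2
variable {k : ℕ} {j : ℤ} {Y : YoungDiagram}

lemma ucard_sdown (hk2 : 2 ≤ k) (hreg : kreg k Y) (hex : ∃ f, CorB k j Y f) :
    ucard k (sdown k j Y) + 1 = ucard k Y := by
  have hk1 : 1 ≤ k := by omega
  have hcl := (kreg_iff_closure hk1 Y).mp hreg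
  set N := Y.colLen 0 with hNdef
  have hN' : (sdown k j Y).colLen 0 ≤ N := colLen0_le_of_le (sdown_le k j Y)
  rw [ucard_eq_sum k Y N le_rfl, ucard_eq_sum k (sdown k j Y) N hN']
  set a : ℕ → ℕ := fun r => (gw k (sdown k j Y) (bY (sdown k j Y) r)).card with ha
  set bb : ℕ → ℕ := fun r => (gw k Y (bY Y r)).card with hbb
  set RW := cornerRows k j Y with hRW
  have hfilter_eq : (Finset.range N).filter (Cor k j Y) = RW := by
    ext r
    rw [Finset.mem_filter, Finset.mem_range, hRW, mem_cornerRows]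
    exact ⟨fun h => h.2, fun h => ⟨cor_lt_colLen h, h⟩⟩
  have hRWne : RW.Nonempty := by
    obtain ⟨f, hf⟩ := hex
    obtain ⟨r, _, hcor⟩ := corB_row k j Y hf
    exact ⟨r, mem_cornerRows.mpr hcor⟩
  set r0 := RW.max' hRWne with hr0
  have hr0RW : r0 ∈ RW := RW.max'_mem hRWne
  -- split both sums
  have hsplitA : ∑ r ∈ Finset.range N, a r
      = ∑ r ∈ RW, a r + ∑ r ∈ (Finset.range N).filter (fun r => ¬ Cor k j Y r), a r := by
    rw [← hfilter_eq]
    exact (Finset.sum_filter_add_sum_filter_not _ _ _).symm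
  have hsplitB : ∑ r ∈ Finset.range N, bb r
      = ∑ r ∈ RW, bb r + ∑ r ∈ (Finset.range N).filter (fun r => ¬ Cor k j Y r), bb r := by
    rw [← hfilter_eq]
    exact (Finset.sum_filter_add_sum_filter_not _ _ _).symm
  have hT : ∑ r ∈ (Finset.range N).filter (fun r => ¬ Cor k j Y r), a r
      = ∑ r ∈ (Finset.range N).filter (fun r => ¬ Cor k j Y r), bb r := by
    apply Finset.sum_congr rfl
    intro r hr
    exact rowA hk2 hcl (Finset.mem_filter.mp hr).2
  -- corner rows
  have hCsum : ∑ r ∈ RW, a r + RW.card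
      = ∑ r ∈ RW, bb r + (RW.filter (fun r => CorB k j Y (bY Y r - k))).card := by
    have h1 : ∑ r ∈ RW, (a r + 1)
        = ∑ r ∈ RW, (bb r + (if CorB k j Y (bY Y r - k) then 1 else 0)) := by
      apply Finset.sum_congr rfl
      intro r hr
      exact rowB hk2 hcl (mem_cornerRows.mp hr)
    rw [Finset.sum_add_distrib, Finset.sum_add_distrib] at h1
    simp only [Finset.sum_const, smul_eq_mul, mul_one] at h1
    rwa [Finset.sum_boole, Nat.cast_id] at h1
  have hErase : RW.filter (fun r => CorB k j Y (bY Y r - k)) = RW.erase r0 := by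
    ext r
    rw [Finset.mem_filter, Finset.mem_erase]
    constructor
    · rintro ⟨hrRW, hP⟩
      refine ⟨?_, hrRW⟩
      intro heq
      obtain ⟨s, hs, hcors⟩ := corB_row k j Y hP
      have hsRW : s ∈ RW := mem_cornerRows.mpr hcors
      have hle : s ≤ r0 := RW.le_max' s hsRW
      have h2 : bY Y r0 ≤ bY Y s := bY_le_of_le Y hle
      rw [heq] at hs
      have hk0 : (0:ℤ) < (k:ℤ) := by exact_mod_cast hk1
      omega
    · rintro ⟨hne, hrRW⟩
      refine ⟨hrRW, ?_⟩
      have hle : r ≤ r0 := RW.le_max' r hrRW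
      have hlt : r < r0 := lt_of_le_of_ne hle hne
      have hblt : bY Y r0 < bY Y r := (bY_strictAnti Y) hlt
      exact corB_contig hk1 hcl
        ((cor_iff_corB k j Y r).mp (mem_cornerRows.mp hrRW))
        ((cor_iff_corB k j Y r0).mp (mem_cornerRows.mp hr0RW)) hblt
  rw [hErase, Finset.card_erase_of_mem hr0RW] at hCsum
  have hM : 1 ≤ RW.card := Finset.card_pos.mpr hRWne
  rw [hsplitA, hsplitB, hT]
  omega

lemma ucard_sraise (hk2 : 2 ≤ k) (hreg : kreg k Y) (hex : ∃ g, AddB k j Y g) :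
    ucard k (sraise k j Y) = ucard k Y + 1 := by
  have hk1 : 1 ≤ k := by omega
  have hcl := (kreg_iff_closure hk1 Y).mp hreg
  have hreg' : kreg k (sraise k j Y) := kreg_sraise hk2 hreg
  have hexC : ∃ f, CorB k j (sraise k j Y) f := by
    obtain ⟨g, hg⟩ := hex
    refine ⟨g + 1, (corB_sraise_iff hk2 hcl ⟨g, hg⟩ (g + 1)).mpr ?_⟩
    have e : g + 1 - 1 = g := by ring
    rwa [e]
  have h := ucard_sdown hk2 hreg' hexC
  rw [sdown_sraise hk2 hcl hex] at h
  omega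

end Count2

-- STAGE9
section Mono
variable {k : ℕ}

lemma eq_of_cells {Y Z : YoungDiagram} (h : Y.cells = Z.cells) : Y = Z := by
  obtain ⟨cy, _⟩ := Y
  obtain ⟨cz, _⟩ := Z
  simpa using h

lemma exists_corner_box {κ Γ : YoungDiagram} (hle : Γ ≤ κ) (hne : Γ ≠ κ) :
    ∃ r c : ℕ, (r, c) ∈ κ ∧ (r, c) ∉ Γ ∧ (r, c + 1) ∉ κ ∧ (r + 1, c) ∉ κ := by
  have hsub : Γ.cells ⊆ κ.cells := YoungDiagram.cells_subset_iff.mpr hle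
  have hne' : Γ.cells ≠ κ.cells := fun h => hne (eq_of_cells h)
  have hD : (κ.cells \ Γ.cells).Nonempty := by
    rw [Finset.sdiff_nonempty]
    intro hc
    exact hne' (Finset.Subset.antisymm hsub hc)
  obtain ⟨p, hp, hmax⟩ := Finset.exists_max_image (κ.cells \ Γ.cells) (fun q => q.1 + q.2) hD
  obtain ⟨r, c⟩ := p
  rw [Finset.mem_sdiff] at hp
  refine ⟨r, c, (YoungDiagram.mem_cells _).mp hp.1, fun h => hp.2 ((YoungDiagram.mem_cells _).mpr h), ?_, ?_⟩
  · intro hmem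
    have hnG : (r, c + 1) ∉ Γ.cells := by
      intro hc'
      exact hp.2 ((YoungDiagram.mem_cells _).mpr
        (Γ.up_left_mem le_rfl (Nat.le_succ c) ((YoungDiagram.mem_cells _).mp hc')))
    have : (r, c + 1) ∈ κ.cells \ Γ.cells :=
      Finset.mem_sdiff.mpr ⟨(YoungDiagram.mem_cells _).mpr hmem, hnG⟩
    have := hmax _ this
    simp at this
  · intro hmem
    have hnG : (r + 1, c) ∉ Γ.cells := by
      intro hc'
      exact hp.2 ((YoungDiagram.mem_cells _).mpr
        (Γ.up_left_mem (Nat.le_succ r) le_rfl ((YoungDiagram.mem_cells _).mp hc')))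
    have : (r + 1, c) ∈ κ.cells \ Γ.cells :=
      Finset.mem_sdiff.mpr ⟨(YoungDiagram.mem_cells _).mpr hmem, hnG⟩
    have := hmax _ this
    simp at this

lemma cor_of_box {κ : YoungDiagram} {r c : ℕ} (h1 : (r, c) ∈ κ) (h2 : (r, c + 1) ∉ κ)
    (h3 : (r + 1, c) ∉ κ) : κ.rowLen r = c + 1 ∧ Cor k ((c : ℤ) - r) κ r := by
  have hlt : c < κ.rowLen r := YoungDiagram.mem_iff_lt_rowLen.mp h1
  have hge : κ.rowLen r ≤ c + 1 := by
    by_contra hc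
    exact h2 (YoungDiagram.mem_iff_lt_rowLen.mpr (by omega))
  have hrl : κ.rowLen r = c + 1 := by omega
  have hnext : κ.rowLen (r + 1) ≤ c := by
    by_contra hc
    exact h3 (YoungDiagram.mem_iff_lt_rowLen.mpr (by omega))
  refine ⟨hrl, ⟨by omega, ?_⟩⟩
  rw [hrl]
  push_cast
  have e : (c:ℤ) + 1 - 1 - r = (c:ℤ) - r := by ring
  rw [e]

lemma mono_aux (hk2 : 2 ≤ k) : ∀ n : ℕ, ∀ κ Γ : YoungDiagram, κ.cells.card ≤ n →
    kreg k κ → kreg k Γ → Γ ≤ κ →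
    ucard k Γ ≤ ucard k κ ∧ (Γ ≠ κ → ucard k Γ < ucard k κ) := by
  have hk1 : 1 ≤ k := by omega
  intro n
  induction n with
  | zero =>
      intro κ Γ hcard hregκ hregΓ hle
      have hκ : κ.cells = ∅ := Finset.card_eq_zero.mp (by omega)
      have hΓ : Γ.cells = ∅ := Finset.subset_empty.mp
        (hκ ▸ YoungDiagram.cells_subset_iff.mpr hle)
      have : Γ = κ := eq_of_cells (by rw [hκ, hΓ])
      exact ⟨le_of_eq (by rw [this]), fun h => absurd this h⟩
  | succ n ih =>
      intro κ Γ hcard hregκ hregΓ hle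
      by_cases heq : Γ = κ
      · exact ⟨le_of_eq (by rw [heq]), fun h => absurd heq h⟩
      obtain ⟨r, c, hbox, hboxΓ, hbox2, hbox3⟩ := exists_corner_box hle heq
      obtain ⟨hrl, hcorκ⟩ := cor_of_box (k := k) hbox hbox2 hbox3
      set jj : ℤ := (c : ℤ) - r with hjj
      have hexκ : ∃ f, CorB k jj κ f := ⟨bY κ r, (cor_iff_corB k jj κ r).mp hcorκ⟩
      have hclκ := (kreg_iff_closure hk1 κ).mp hregκ
      have husκ := ucard_sdown hk2 hregκ hexκ
      have hregκ₁ : kreg k (sdown k jj κ) := kreg_sdown hk2 hregκ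
      -- κ₁ is strictly smaller
      have hssub : sdown k jj κ < κ := by
        apply lt_of_le_of_ne (sdown_le k jj κ)
        intro hcon
        have h1 : (sdown k jj κ).rowLen r = κ.rowLen r - 1 := by
          rw [rowLen_sdown, if_pos hcorκ]
        rw [hcon] at h1
        have := hcorκ.1
        omega
      have hcard₁ : (sdown k jj κ).cells.card ≤ n := by
        have := Finset.card_lt_card (YoungDiagram.cells_ssubset_iff.mpr hssub)
        omega
      -- the transfer lemma
      have htrans : ∀ s, Cor k jj κ s → Γ.rowLen s = κ.rowLen s → Cor k jj Γ s := by
        intro s hcor heqr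
        refine ⟨?_, ?_⟩
        · have h1 := (le_iff_rowLen Γ κ).mp hle (s + 1)
          have := hcor.1
          omega
        · rw [heqr]
          exact hcor.2
      by_cases hpos : ∃ r', Cor k jj Γ r'
      · -- both move down
        obtain ⟨r', hcorΓ⟩ := hpos
        have hexΓ : ∃ f, CorB k jj Γ f := ⟨bY Γ r', (cor_iff_corB k jj Γ r').mp hcorΓ⟩
        have hclΓ := (kreg_iff_closure hk1 Γ).mp hregΓ
        have husΓ := ucard_sdown hk2 hregΓ hexΓ
        have hregΓ₁ : kreg k (sdown k jj Γ) := kreg_sdown hk2 hregΓ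
        have hle₁ : sdown k jj Γ ≤ sdown k jj κ := by
          rw [le_iff_rowLen]
          intro s
          rw [rowLen_sdown, rowLen_sdown]
          have h1 := (le_iff_rowLen Γ κ).mp hle s
          by_cases hcs : Cor k jj κ s <;> by_cases hgs : Cor k jj Γ s <;>
            simp only [hcs, hgs, if_true, if_false] <;> try omega
          · -- Cor κ s, ¬ Cor Γ s : strict
            have : Γ.rowLen s ≠ κ.rowLen s := fun he => hgs (htrans s hcs he)
            omega
        obtain ⟨ihw, ihs⟩ := ih (sdown k jj κ) (sdown k jj Γ) hcard₁ hregκ₁ hregΓ₁ hle₁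
        constructor
        · omega
        · intro _
          by_cases heq₁ : sdown k jj Γ = sdown k jj κ
          · exfalso
            apply heq
            have e1 : sraise k jj (sdown k jj Γ) = Γ := sraise_sdown hk2 hclΓ hexΓ
            have e2 : sraise k jj (sdown k jj κ) = κ := sraise_sdown hk2 hclκ hexκ
            rw [← e1, ← e2, heq₁]
          · have := ihs heq₁
            omega
      · -- Γ has no class-jj corner : Γ ≤ sdown κ
        have hle₁ : Γ ≤ sdown k jj κ := by
          rw [le_iff_rowLen]
          intro s
          rw [rowLen_sdown]
          have h1 := (le_iff_rowLen Γ κ).mp hle s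
          by_cases hcs : Cor k jj κ s
          · rw [if_pos hcs]
            have : Γ.rowLen s ≠ κ.rowLen s := fun he => hpos ⟨s, htrans s hcs he⟩
            omega
          · rw [if_neg hcs]
            exact h1
        obtain ⟨ihw, _⟩ := ih (sdown k jj κ) Γ hcard₁ hregκ₁ hregΓ hle₁
        exact ⟨by omega, fun _ => by omega⟩

lemma ucard_mono (hk2 : 2 ≤ k) {κ Γ : YoungDiagram} (hregκ : kreg k κ) (hregΓ : kreg k Γ)
    (hle : Γ ≤ κ) : ucard k Γ ≤ ucard k κ :=
  (mono_aux hk2 κ.cells.card κ Γ le_rfl hregκ hregΓ hle).1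

lemma ucard_strict_mono (hk2 : 2 ≤ k) {κ Γ : YoungDiagram} (hregκ : kreg k κ)
    (hregΓ : kreg k Γ) (hle : Γ ≤ κ) (hne : Γ ≠ κ) : ucard k Γ < ucard k κ :=
  (mono_aux hk2 κ.cells.card κ Γ le_rfl hregκ hregΓ hle).2 hne

end Mono

-- STAGE10
section LB
variable {k : ℕ}

lemma ucard_bot : ucard k ⊥ = 0 := by
  unfold ucard
  rw [YoungDiagram.cells_bot]
  simp

lemma lower_bound (hk2 : 2 ≤ k) : ∀ n : ℕ, ∀ (Y : YoungDiagram) (T : ℕ × ℕ → ℕ),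
    Y.cells.card ≤ n →
    (∀ c ∈ Y.cells, ∀ c' ∈ Y.cells, c.1 = c'.1 → c.2 < c'.2 → T c < T c') →
    (∀ c ∈ Y.cells, ∀ c' ∈ Y.cells, c.2 = c'.2 → c.1 < c'.1 → T c < T c') →
    (∀ c ∈ Y.cells, ∀ c' ∈ Y.cells, T c = T c' →
      ((c.2 : ℤ) - (c.1 : ℤ)) ≡ ((c'.2 : ℤ) - (c'.1 : ℤ)) [ZMOD (k : ℤ)]) →
    ∃ κ : YoungDiagram, kreg k κ ∧ Y ≤ κ ∧ ucard k κ ≤ (Y.cells.image T).card := by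
  intro n
  induction n with
  | zero =>
      intro Y T hcard _ _ _
      have hY : Y.cells = ∅ := Finset.card_eq_zero.mp (by omega)
      have hYbot : Y = ⊥ := eq_of_cells (by rw [hY, YoungDiagram.cells_bot])
      refine ⟨⊥, ?_, le_of_eq hYbot, ?_⟩
      · intro c hc
        rw [YoungDiagram.cells_bot] at hc
        simp at hc
      · rw [ucard_bot]
        omega
  | succ n ih =>
      intro Y T hcard hrow hcol hres
      by_cases hempty : Y.cells = ∅
      · have hYbot : Y = ⊥ := eq_of_cells (by rw [hempty, YoungDiagram.cells_bot])
        refine ⟨⊥, ?_, le_of_eq hYbot, ?_⟩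
        · intro c hc
          rw [YoungDiagram.cells_bot] at hc
          simp at hc
        · rw [ucard_bot]
          omega
      -- max letter
      have himg : (Y.cells.image T).Nonempty :=
        Finset.Nonempty.image (Finset.nonempty_iff_ne_empty.mpr hempty) T
      set t := (Y.cells.image T).max' himg with ht
      set W := Y.cells.filter (fun c => T c = t) with hW
      have hWne : W.Nonempty := by
        obtain ⟨c, hc, hct⟩ := Finset.mem_image.mp ((Y.cells.image T).max'_mem himg)
        exact ⟨c, Finset.mem_filter.mpr ⟨hc, hct⟩⟩
      have hmax : ∀ c ∈ Y.cells, T c ≤ t := fun c hc =>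
        (Y.cells.image T).le_max' _ (Finset.mem_image_of_mem T hc)
      -- every W box is a removable corner
      have hWcorner : ∀ w ∈ W, w.2 + 1 = Y.rowLen w.1 ∧ Y.rowLen (w.1 + 1) ≤ w.2 := by
        intro w hw
        obtain ⟨hwY, hwt⟩ := Finset.mem_filter.mp hw
        constructor
        · have hlt : w.2 < Y.rowLen w.1 :=
            YoungDiagram.mem_iff_lt_rowLen.mp ((YoungDiagram.mem_cells _).mp hwY)
          by_contra hc
          have hmem : (w.1, w.2 + 1) ∈ Y.cells := (YoungDiagram.mem_cells _).mpr
            (YoungDiagram.mem_iff_lt_rowLen.mpr (by omega))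
          have := hrow w hwY (w.1, w.2 + 1) hmem rfl (by omega)
          have := hmax _ hmem
          omega
        · by_contra hc
          push_neg at hc
          have hmem : (w.1 + 1, w.2) ∈ Y.cells := (YoungDiagram.mem_cells _).mpr
            (YoungDiagram.mem_iff_lt_rowLen.mpr (by omega))
          have := hcol w hwY (w.1 + 1, w.2) hmem rfl (by omega)
          have := hmax _ hmem
          omega
      set RS := W.image Prod.fst with hRS
      have hRSprop : ∀ r ∈ RS, Y.rowLen (r + 1) < Y.rowLen r := by
        intro r hr
        obtain ⟨w, hw, hw1⟩ := Finset.mem_image.mp hr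
        obtain ⟨h1, h2⟩ := hWcorner w hw
        rw [← hw1]
        omega
      -- the W-box in a row of RS is the last box
      have hWbox : ∀ a ∈ RS, (a, Y.rowLen a - 1) ∈ W := by
        intro a ha
        obtain ⟨w, hw, hw1⟩ := Finset.mem_image.mp ha
        obtain ⟨h1, _⟩ := hWcorner w hw
        have : w = (a, Y.rowLen a - 1) := by
          obtain ⟨w1, w2⟩ := w
          simp only [Prod.mk.injEq]
          constructor
          · exact hw1
          · simp only at h1 hw1
            rw [hw1] at h1
            omega
        rwa [this] at hw
      set Y₁ := eraseRows Y RS hRSprop with hY₁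
      have hY₁cells : Y₁.cells = Y.cells \ W := by
        ext p
        obtain ⟨a, b⟩ := p
        rw [YoungDiagram.mem_cells, Finset.mem_sdiff, YoungDiagram.mem_cells,
          YoungDiagram.mem_iff_lt_rowLen, YoungDiagram.mem_iff_lt_rowLen]
        rw [hY₁, rowLen_eraseRows]
        by_cases ha : a ∈ RS
        · rw [if_pos ha]
          have hbox := hWbox a ha
          have hrl : 1 ≤ Y.rowLen a := by
            obtain ⟨h1, _⟩ := hWcorner _ hbox
            simp only at h1
            omega
          constructor
          · intro hb
            refine ⟨by omega, ?_⟩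
            intro hbW
            obtain ⟨h1, _⟩ := hWcorner _ hbW
            simp only at h1
            omega
          · rintro ⟨hb, hbW⟩
            by_contra hc
            push_neg at hc
            have : b = Y.rowLen a - 1 := by omega
            rw [this] at hbW
            exact hbW hbox
        · rw [if_neg ha]
          constructor
          · intro hb
            refine ⟨hb, ?_⟩
            intro hbW
            apply ha
            rw [hRS]
            exact Finset.mem_image_of_mem _ hbW
          · rintro ⟨hb, _⟩
            exact hb
      have hWsub : W ⊆ Y.cells := Finset.filter_subset _ _
      have hcard₁ : Y₁.cells.card ≤ n := by
        rw [hY₁cells, Finset.card_sdiff_of_subset hWsub]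
        have h1 : 1 ≤ W.card := Finset.card_pos.mpr hWne
        have h2 : W.card ≤ Y.cells.card := Finset.card_le_card hWsub
        omega
      have hsub₁ : Y₁.cells ⊆ Y.cells := by
        rw [hY₁cells]
        exact Finset.sdiff_subset
      -- image of the restriction
      have himg₁ : Y₁.cells.image T = (Y.cells.image T).erase t := by
        ext s
        rw [Finset.mem_image, Finset.mem_erase, Finset.mem_image]
        constructor
        · rintro ⟨c, hc, rfl⟩
          have hc' := hY₁cells ▸ hc
          rw [Finset.mem_sdiff] at hc'
          refine ⟨?_, c, hc'.1, rfl⟩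
          intro hct
          exact hc'.2 (Finset.mem_filter.mpr ⟨hc'.1, hct⟩)
        · rintro ⟨hst, c, hc, rfl⟩
          refine ⟨c, ?_, rfl⟩
          rw [hY₁cells, Finset.mem_sdiff]
          exact ⟨hc, fun hcW => hst (Finset.mem_filter.mp hcW).2⟩
      have himgcard : (Y₁.cells.image T).card + 1 = (Y.cells.image T).card := by
        rw [himg₁, Finset.card_erase_of_mem ((Y.cells.image T).max'_mem himg)]
        have : 1 ≤ (Y.cells.image T).card := Finset.card_pos.mpr himg
        omega
      -- apply IH
      obtain ⟨κ', hregκ', hle₁, hucard'⟩ := ih Y₁ T hcard₁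
        (fun c hc c' hc' => hrow c (hsub₁ hc) c' (hsub₁ hc'))
        (fun c hc c' hc' => hcol c (hsub₁ hc) c' (hsub₁ hc'))
        (fun c hc c' hc' => hres c (hsub₁ hc) c' (hsub₁ hc'))
      by_cases hYκ' : Y ≤ κ'
      · exact ⟨κ', hregκ', hYκ', by omega⟩
      -- choose residue
      obtain ⟨w0, hw0⟩ := hWne
      set jj : ℤ := (w0.2 : ℤ) - (w0.1 : ℤ) with hjj
      have hWclass : ∀ w ∈ W, ((w.2 : ℤ) - (w.1 : ℤ)) ≡ jj [ZMOD (k : ℤ)] := by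
        intro w hw
        have h1 := (Finset.mem_filter.mp hw).2
        have h2 := (Finset.mem_filter.mp hw0).2
        exact hres w (Finset.mem_filter.mp hw).1 w0 (Finset.mem_filter.mp hw0).1 (by rw [h1, h2])
      -- rows where κ' falls short
      have hshort : ∀ q, κ'.rowLen q < Y.rowLen q → (q ∈ RS ∧ κ'.rowLen q = Y.rowLen q - 1) := by
        intro q hq
        have h1 := (le_iff_rowLen Y₁ κ').mp hle₁ q
        rw [hY₁, rowLen_eraseRows] at h1
        by_cases hqRS : q ∈ RS
        · rw [if_pos hqRS] at h1
          exact ⟨hqRS, by omega⟩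
        · rw [if_neg hqRS] at h1
          omega
      have haddb : ∀ q, q ∈ RS → κ'.rowLen q = Y.rowLen q - 1 → Addb k jj κ' q := by
        intro q hqRS hq
        have hbox := hWbox q hqRS
        have hcor := hWcorner _ hbox
        simp only at hcor
        have hrl : 1 ≤ Y.rowLen q := by omega
        constructor
        · by_cases hq0 : q = 0
          · exact Or.inl hq0
          · right
            have h1 := (le_iff_rowLen Y₁ κ').mp hle₁ (q - 1)
            rw [hY₁, rowLen_eraseRows] at h1
            have h2 : Y.rowLen q ≤ κ'.rowLen (q - 1) := by
              by_cases hq1RS : (q - 1) ∈ RS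
              · rw [if_pos hq1RS] at h1
                have := hRSprop (q - 1) hq1RS
                have he : q - 1 + 1 = q := by omega
                rw [he] at this
                omega
              · rw [if_neg hq1RS] at h1
                have := Y.rowLen_anti (q - 1) q (by omega)
                omega
            omega
        · have hcls := hWclass _ hbox
          simp only at hcls
          have e : (κ'.rowLen q : ℤ) - q = ((Y.rowLen q - 1 : ℕ) : ℤ) - q := by
            rw [hq]
          rw [e]
          exact hcls
      -- the failing row gives an addable corner
      have hexA : ∃ g, AddB k jj κ' g := by
        rw [le_iff_rowLen] at hYκ'
        push_neg at hYκ'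
        obtain ⟨q, hq⟩ := hYκ'
        obtain ⟨hqRS, hqeq⟩ := hshort q hq
        exact ⟨bY κ' q, (addb_iff_addB k jj κ' q).mp (haddb q hqRS hqeq)⟩
      refine ⟨sraise k jj κ', kreg_sraise hk2 hregκ', ?_, ?_⟩
      · rw [le_iff_rowLen]
        intro q
        rw [rowLen_sraise]
        by_cases hql : Y.rowLen q ≤ κ'.rowLen q
        · by_cases hA : Addb k jj κ' q <;> simp only [hA, if_true, if_false] <;> omega
        · push_neg at hql
          obtain ⟨hqRS, hqeq⟩ := hshort q hql
          rw [if_pos (haddb q hqRS hqeq)]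
          omega
      · rw [ucard_sraise hk2 hregκ' hexA]
        omega

end LB

end
end EFR

-- STAGE11 : final theorem
/-- let `T` be an efficient (`k`-regular, using the minimum number
`u(Γ)` = number of boxes of hook length `< k` of symbols) filling of a `k`-core `Γ`,
let `t` be the largest symbol appearing in `T`, of diagonal residue class `j`.  Then the
boxes with symbols `< t` form exactly the `k`-core `s_j·Γ` (obtained from `Γ` by removing
all removable corners of residue `j`), the restriction of `T` to them is an efficient
filling of `s_j·Γ`, and `u(s_j·Γ) = u(Γ) − 1`. -/
theorem efficient_filling_restriction
    (k : ℕ) (hk : 1 ≤ k) (Γ : YoungDiagram)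
    (hcore : ∀ c ∈ Γ.cells, ¬ (k ∣ hookLength Γ c))
    (T : ℕ × ℕ → ℕ)
    (hrow : ∀ c ∈ Γ.cells, ∀ c' ∈ Γ.cells, c.1 = c'.1 → c.2 < c'.2 → T c < T c')
    (hcol : ∀ c ∈ Γ.cells, ∀ c' ∈ Γ.cells, c.2 = c'.2 → c.1 < c'.1 → T c < T c')
    (hres : ∀ c ∈ Γ.cells, ∀ c' ∈ Γ.cells, T c = T c' →
      ((c.2 : ℤ) - (c.1 : ℤ)) ≡ ((c'.2 : ℤ) - (c'.1 : ℤ)) [ZMOD (k : ℤ)])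
    (heff : (Γ.cells.image T).card = (Γ.cells.filter (fun c => hookLength Γ c < k)).card)
    (t : ℕ) (ht : t ∈ Γ.cells.image T) (htmax : ∀ c ∈ Γ.cells, T c ≤ t)
    (j : ℤ) (hj : ∀ c ∈ Γ.cells, T c = t → ((c.2 : ℤ) - (c.1 : ℤ)) ≡ j [ZMOD (k : ℤ)])
    (Γ' : YoungDiagram)
    (hΓ' : ∀ c : ℕ × ℕ, c ∈ Γ'.cells ↔
      c ∈ Γ.cells ∧
        ¬ (IsRemovableCorner Γ c ∧ ((c.2 : ℤ) - (c.1 : ℤ)) ≡ j [ZMOD (k : ℤ)])) :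
    (∀ c : ℕ × ℕ, c ∈ Γ'.cells ↔ c ∈ Γ.cells ∧ T c ≠ t) ∧
    (∀ c ∈ Γ'.cells, ¬ (k ∣ hookLength Γ' c)) ∧
    (Γ'.cells.filter (fun c => hookLength Γ' c < k)).card + 1
      = (Γ.cells.filter (fun c => hookLength Γ c < k)).card ∧
    (Γ'.cells.image T).card = (Γ'.cells.filter (fun c => hookLength Γ' c < k)).card := by
  classical
  open EFR in
  -- k ≥ 2
  have hk2 : 2 ≤ k := by
    by_contra hc
    have hk1 : k = 1 := by omega
    have hE : Γ.cells = ∅ := by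
      apply Finset.eq_empty_of_forall_notMem
      intro c hcc
      exact hcore c hcc (hk1 ▸ one_dvd _)
    rw [hE] at ht
    simp at ht
  have hregΓ : EFR.kreg k Γ := hcore
  set W := Γ.cells.filter (fun c => T c = t) with hW
  have hWne : W.Nonempty := by
    obtain ⟨c, hc, hct⟩ := Finset.mem_image.mp ht
    exact ⟨c, Finset.mem_filter.mpr ⟨hc, hct⟩⟩
  have hWcorner : ∀ w ∈ W, w.2 + 1 = Γ.rowLen w.1 ∧ Γ.rowLen (w.1 + 1) ≤ w.2 := by
    intro w hw
    obtain ⟨hwY, hwt⟩ := Finset.mem_filter.mp hw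
    constructor
    · have hlt : w.2 < Γ.rowLen w.1 :=
        YoungDiagram.mem_iff_lt_rowLen.mp ((YoungDiagram.mem_cells _).mp hwY)
      by_contra hcon
      have hmem : (w.1, w.2 + 1) ∈ Γ.cells := (YoungDiagram.mem_cells _).mpr
        (YoungDiagram.mem_iff_lt_rowLen.mpr (by omega))
      have := hrow w hwY (w.1, w.2 + 1) hmem rfl (by omega)
      have := htmax _ hmem
      omega
    · by_contra hcon
      push_neg at hcon
      have hmem : (w.1 + 1, w.2) ∈ Γ.cells := (YoungDiagram.mem_cells _).mpr
        (YoungDiagram.mem_iff_lt_rowLen.mpr (by omega))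
      have := hcol w hwY (w.1 + 1, w.2) hmem rfl (by omega)
      have := htmax _ hmem
      omega
  set RS := W.image Prod.fst with hRS
  have hRSprop : ∀ r ∈ RS, Γ.rowLen (r + 1) < Γ.rowLen r := by
    intro r hr
    obtain ⟨w, hw, hw1⟩ := Finset.mem_image.mp hr
    obtain ⟨h1, h2⟩ := hWcorner w hw
    rw [← hw1]
    omega
  have hWbox : ∀ a ∈ RS, (a, Γ.rowLen a - 1) ∈ W := by
    intro a ha
    obtain ⟨w, hw, hw1⟩ := Finset.mem_image.mp ha
    obtain ⟨h1, _⟩ := hWcorner w hw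
    have : w = (a, Γ.rowLen a - 1) := by
      obtain ⟨w1, w2⟩ := w
      simp only [Prod.mk.injEq]
      refine ⟨hw1, ?_⟩
      simp only at h1 hw1
      rw [hw1] at h1
      omega
    rwa [this] at hw
  -- rows of RS are class-j corner rows
  have hRScor : ∀ r ∈ RS, EFR.Cor k j Γ r := by
    intro r hr
    have hbox := hWbox r hr
    have hb := Finset.mem_filter.mp hbox
    have hcls := hj _ hb.1 hb.2
    refine ⟨hRSprop r hr, ?_⟩
    have hrl : 1 ≤ Γ.rowLen r := by
      have := hWcorner _ hbox
      simp only at this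
      omega
    have e : (Γ.rowLen r : ℤ) - 1 - r = ((Γ.rowLen r - 1 : ℕ) : ℤ) - r := by
      push_cast [hrl]
      ring
    rw [e]
    exact hcls
  set Y₁ := EFR.eraseRows Γ RS hRSprop with hY₁
  have hY₁cells : Y₁.cells = Γ.cells \ W := by
    ext p
    obtain ⟨a, b⟩ := p
    rw [YoungDiagram.mem_cells, Finset.mem_sdiff, YoungDiagram.mem_cells,
      YoungDiagram.mem_iff_lt_rowLen, YoungDiagram.mem_iff_lt_rowLen]
    rw [hY₁, EFR.rowLen_eraseRows]
    by_cases ha : a ∈ RS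
    · rw [if_pos ha]
      have hbox := hWbox a ha
      have hrl : 1 ≤ Γ.rowLen a := by
        obtain ⟨h1, _⟩ := hWcorner _ hbox
        simp only at h1
        omega
      constructor
      · intro hb
        refine ⟨by omega, ?_⟩
        intro hbW
        obtain ⟨h1, _⟩ := hWcorner _ hbW
        simp only at h1
        omega
      · rintro ⟨hb, hbW⟩
        by_contra hcon
        push_neg at hcon
        have : b = Γ.rowLen a - 1 := by omega
        rw [this] at hbW
        exact hbW hbox
    · rw [if_neg ha]
      constructor
      · intro hb
        refine ⟨hb, ?_⟩
        intro hbW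
        apply ha
        rw [hRS]
        exact Finset.mem_image_of_mem _ hbW
      · rintro ⟨hb, _⟩
        exact hb
  -- ucard Γ ≥ 1
  have hucard1 : 1 ≤ EFR.ucard k Γ := by
    obtain ⟨w0, hw0⟩ := hWne
    have hb := Finset.mem_filter.mp hw0
    have hcor := hWcorner _ hw0
    have hhook : hookLength Γ w0 = 1 := by
      have h1 : w0.2 < Γ.rowLen w0.1 :=
        YoungDiagram.mem_iff_lt_rowLen.mp ((YoungDiagram.mem_cells _).mp hb.1)
      have h2 : w0.1 < Γ.colLen w0.2 :=
        YoungDiagram.mem_iff_lt_colLen.mp ((YoungDiagram.mem_cells _).mp hb.1)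
      have h3 : Γ.colLen w0.2 ≤ w0.1 + 1 := by
        by_contra hcon
        push_neg at hcon
        have hmem : (w0.1 + 1, w0.2) ∈ Γ := YoungDiagram.mem_iff_lt_colLen.mpr (by omega)
        rw [YoungDiagram.mem_iff_lt_rowLen] at hmem
        omega
      unfold hookLength
      omega
    apply Finset.card_pos.mpr
    refine ⟨w0, Finset.mem_filter.mpr ⟨hb.1, ?_⟩⟩
    rw [hhook]
    omega
  have huY : EFR.ucard k Γ = (Γ.cells.image T).card := by
    rw [heff]
    rfl
  -- image over Y₁
  have himg₁ : Y₁.cells.image T = (Γ.cells.image T).erase t := by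
    ext s
    rw [Finset.mem_image, Finset.mem_erase, Finset.mem_image]
    constructor
    · rintro ⟨c, hc, rfl⟩
      have hc' := hY₁cells ▸ hc
      rw [Finset.mem_sdiff] at hc'
      refine ⟨?_, c, hc'.1, rfl⟩
      intro hct
      exact hc'.2 (Finset.mem_filter.mpr ⟨hc'.1, hct⟩)
    · rintro ⟨hst, c, hc, rfl⟩
      refine ⟨c, ?_, rfl⟩
      rw [hY₁cells, Finset.mem_sdiff]
      exact ⟨hc, fun hcW => hst (Finset.mem_filter.mp hcW).2⟩
  have himgcard : (Y₁.cells.image T).card + 1 = (Γ.cells.image T).card := by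
    rw [himg₁, Finset.card_erase_of_mem ht]
    have : 1 ≤ (Γ.cells.image T).card := Finset.card_pos.mpr ⟨t, ht⟩
    omega
  -- KEY CLAIM : every class-j corner row is in RS
  have hRSfull : ∀ r, EFR.Cor k j Γ r → r ∈ RS := by
    intro r1 hr1
    by_contra hr1RS
    -- apply the lower bound to Y₁
    have hsub₁ : Y₁.cells ⊆ Γ.cells := by
      rw [hY₁cells]
      exact Finset.sdiff_subset
    obtain ⟨κ, hregκ, hle₁, hucardκ⟩ := EFR.lower_bound hk2 Y₁.cells.card Y₁ T le_rfl
      (fun c hc c' hc' => hrow c (hsub₁ hc) c' (hsub₁ hc'))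
      (fun c hc c' hc' => hcol c (hsub₁ hc) c' (hsub₁ hc'))
      (fun c hc c' hc' => hres c (hsub₁ hc) c' (hsub₁ hc'))
    have hucardκ' : EFR.ucard k κ + 1 ≤ EFR.ucard k Γ := by
      rw [huY, ← himgcard]
      omega
    by_cases hΓκ : Γ ≤ κ
    · have := EFR.ucard_mono hk2 hregκ hregΓ hΓκ
      omega
    -- κ misses a W box : raise it
    have hshort : ∀ q, κ.rowLen q < Γ.rowLen q → (q ∈ RS ∧ κ.rowLen q = Γ.rowLen q - 1) := by
      intro q hq
      have h1 := (EFR.le_iff_rowLen Y₁ κ).mp hle₁ q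
      rw [hY₁, EFR.rowLen_eraseRows] at h1
      by_cases hqRS : q ∈ RS
      · rw [if_pos hqRS] at h1
        exact ⟨hqRS, by omega⟩
      · rw [if_neg hqRS] at h1
        omega
    have haddb : ∀ q, q ∈ RS → κ.rowLen q = Γ.rowLen q - 1 → EFR.Addb k j κ q := by
      intro q hqRS hq
      have hbox := hWbox q hqRS
      have hmem := Finset.mem_filter.mp hbox
      have hcls := hj _ hmem.1 hmem.2
      have hcor := hWcorner _ hbox
      simp only at hcor hcls
      have hrl : 1 ≤ Γ.rowLen q := by omega
      constructor
      · by_cases hq0 : q = 0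
        · exact Or.inl hq0
        · right
          have h1 := (EFR.le_iff_rowLen Y₁ κ).mp hle₁ (q - 1)
          rw [hY₁, EFR.rowLen_eraseRows] at h1
          have h2 : Γ.rowLen q ≤ κ.rowLen (q - 1) := by
            by_cases hq1RS : (q - 1) ∈ RS
            · rw [if_pos hq1RS] at h1
              have := hRSprop (q - 1) hq1RS
              have he : q - 1 + 1 = q := by omega
              rw [he] at this
              omega
            · rw [if_neg hq1RS] at h1
              have := Γ.rowLen_anti (q - 1) q (by omega)
              omega
          omega
      · have e : (κ.rowLen q : ℤ) - q = ((Γ.rowLen q - 1 : ℕ) : ℤ) - q := by rw [hq]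
        rw [e]
        exact hcls
    have hexA : ∃ g, EFR.AddB k j κ g := by
      rw [EFR.le_iff_rowLen] at hΓκ
      push_neg at hΓκ
      obtain ⟨q, hq⟩ := hΓκ
      obtain ⟨hqRS, hqeq⟩ := hshort q hq
      exact ⟨EFR.bY κ q, (EFR.addb_iff_addB k j κ q).mp (haddb q hqRS hqeq)⟩
    have hregk2 : EFR.kreg k (EFR.sraise k j κ) := EFR.kreg_sraise hk2 hregκ
    have hucardk2 : EFR.ucard k (EFR.sraise k j κ) = EFR.ucard k κ + 1 :=
      EFR.ucard_sraise hk2 hregκ hexA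
    have hGk2 : Γ ≤ EFR.sraise k j κ := by
      rw [EFR.le_iff_rowLen]
      intro q
      rw [EFR.rowLen_sraise]
      by_cases hql : Γ.rowLen q ≤ κ.rowLen q
      · by_cases hA : EFR.Addb k j κ q <;> simp only [hA, if_true, if_false] <;> omega
      · push_neg at hql
        obtain ⟨hqRS, hqeq⟩ := hshort q hql
        rw [if_pos (haddb q hqRS hqeq)]
        omega
    -- forces equality
    have heqΓ : Γ = EFR.sraise k j κ := by
      by_contra hne
      have := EFR.ucard_strict_mono hk2 hregk2 hregΓ hGk2 hne
      omega
    -- hence κ = sdown k j Γ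
    have hclκ := (EFR.kreg_iff_closure (by omega) κ).mp hregκ
    have hκeq : EFR.sdown k j Γ = κ := by
      rw [heqΓ]
      exact EFR.sdown_sraise hk2 hclκ hexA
    -- contradiction with the surviving corner at row r1
    have hrl1 : 1 ≤ Γ.rowLen r1 := by
      have := hr1.1
      omega
    have hbox1 : (r1, Γ.rowLen r1 - 1) ∈ Y₁.cells := by
      rw [hY₁cells, Finset.mem_sdiff]
      constructor
      · exact (YoungDiagram.mem_cells _).mpr (YoungDiagram.mem_iff_lt_rowLen.mpr (by omega))
      · intro hbW
        exact hr1RS (hRS ▸ Finset.mem_image_of_mem _ hbW)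
    have hboxκ : (r1, Γ.rowLen r1 - 1) ∈ κ.cells :=
      YoungDiagram.cells_subset_iff.mpr hle₁ hbox1
    rw [← hκeq, YoungDiagram.mem_cells, YoungDiagram.mem_iff_lt_rowLen,
      EFR.rowLen_sdown, if_pos hr1] at hboxκ
    omega
  -- box-level equivalence
  have hboxiff : ∀ c ∈ Γ.cells,
      ((IsRemovableCorner Γ c ∧ ((c.2 : ℤ) - (c.1 : ℤ)) ≡ j [ZMOD (k : ℤ)]) ↔ T c = t) := by
    intro c hc
    constructor
    · rintro ⟨hcorn, hcls⟩
      obtain ⟨hmem, hnr, hnc⟩ := hcorn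
      have h1 : c.2 < Γ.rowLen c.1 := YoungDiagram.mem_iff_lt_rowLen.mp hmem
      have h2 : Γ.rowLen c.1 ≤ c.2 + 1 := by
        by_contra hcon
        exact hnc (YoungDiagram.mem_iff_lt_rowLen.mpr (by omega))
      have h3 : Γ.rowLen (c.1 + 1) ≤ c.2 := by
        by_contra hcon
        exact hnr (YoungDiagram.mem_iff_lt_rowLen.mpr (by omega))
      have hcor : EFR.Cor k j Γ c.1 := by
        refine ⟨by omega, ?_⟩
        have e : (Γ.rowLen c.1 : ℤ) - 1 - c.1 = (c.2 : ℤ) - c.1 := by omega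
        rw [e]
        exact hcls
      have hr : c.1 ∈ RS := hRSfull c.1 hcor
      have hbox := hWbox c.1 hr
      have hc2eq : c.2 = Γ.rowLen c.1 - 1 := by omega
      have hceq : c = (c.1, Γ.rowLen c.1 - 1) := Prod.ext rfl hc2eq
      rw [hceq] at hc ⊢
      exact (Finset.mem_filter.mp hbox).2
    · intro hct
      have hcW : c ∈ W := Finset.mem_filter.mpr ⟨hc, hct⟩
      obtain ⟨h1, h2⟩ := hWcorner c hcW
      refine ⟨⟨(YoungDiagram.mem_cells _).mp hc, ?_, ?_⟩, hj c hc hct⟩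
      · rw [YoungDiagram.mem_iff_lt_rowLen]
        omega
      · rw [YoungDiagram.mem_iff_lt_rowLen]
        omega
  -- first conclusion
  have hgoal1 : ∀ c : ℕ × ℕ, c ∈ Γ'.cells ↔ c ∈ Γ.cells ∧ T c ≠ t := by
    intro c
    rw [hΓ' c]
    constructor
    · rintro ⟨hc, hnc⟩
      exact ⟨hc, fun hct => hnc ((hboxiff c hc).mpr hct)⟩
    · rintro ⟨hc, hct⟩
      exact ⟨hc, fun hcorn => hct ((hboxiff c hc).mp hcorn)⟩
  -- Γ' = sdown k j Γ
  have hΓ'cells : Γ'.cells = Y₁.cells := by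
    ext c
    rw [hgoal1 c, hY₁cells, Finset.mem_sdiff]
    constructor
    · rintro ⟨hc, hct⟩
      exact ⟨hc, fun hcW => hct (Finset.mem_filter.mp hcW).2⟩
    · rintro ⟨hc, hcW⟩
      exact ⟨hc, fun hct => hcW (Finset.mem_filter.mpr ⟨hc, hct⟩)⟩
  have hY₁sdown : Y₁ = EFR.sdown k j Γ := by
    apply EFR.eq_of_rowLen_eq
    intro r
    rw [hY₁, EFR.rowLen_eraseRows, EFR.rowLen_sdown]
    by_cases hr : r ∈ RS
    · rw [if_pos hr, if_pos (hRScor r hr)]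
    · rw [if_neg hr, if_neg (fun hc => hr (hRSfull r hc))]
  have hΓ'sdown : Γ' = EFR.sdown k j Γ := by
    apply EFR.eq_of_cells
    rw [hΓ'cells, hY₁sdown]
  have hexC : ∃ f, EFR.CorB k j Γ f := by
    obtain ⟨w0, hw0⟩ := hWne
    have hr : w0.1 ∈ RS := hRS ▸ Finset.mem_image_of_mem _ hw0
    exact ⟨EFR.bY Γ w0.1, (EFR.cor_iff_corB k j Γ w0.1).mp (hRScor _ hr)⟩
  -- conclusions
  have hgoal2 : ∀ c ∈ Γ'.cells, ¬ (k ∣ hookLength Γ' c) := by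
    rw [hΓ'sdown]
    exact EFR.kreg_sdown hk2 hregΓ
  have hgoal3 : EFR.ucard k Γ' + 1 = EFR.ucard k Γ := by
    rw [hΓ'sdown]
    exact EFR.ucard_sdown hk2 hregΓ hexC
  have hgoal4 : (Γ'.cells.image T).card = EFR.ucard k Γ' := by
    have h1 : Γ'.cells.image T = Y₁.cells.image T := by rw [hΓ'cells]
    rw [h1]
    have := himgcard
    rw [← huY] at this
    omega
  exact ⟨hgoal1, hgoal2, hgoal3, hgoal4⟩
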